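/- arXiv:1810.09758 — 5 statements merged into one kernel-verified Lean document; each statement's English description precedes it below -/
import Mathlib

section
/- Let p be a complex polynomial with deg(p) ≥ 2 and P the corresponding matrix polynomial on 2×2 matrices. If a non-diagonalizable matrix M = Q · [[λ,1],[0,λ]] · Q^{-1} has bounded orbit under iteration of P, then λ lies in the filled Julia set K_p = {z : (p^r(z))_{r≥1} is bounded}. -/
open Matrix Polynomial Filter

attribute [local instance] Matrix.frobeniusNormedAddCommGroup Matrix.frobeniusNormedSpace

noncomputable section

/-- The filled Julia set of a complex polynomial. -/
def filledJulia (p : Polynomial ℂ) : Set ℂ :=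
  {z | Bornology.IsBounded (Set.range fun r : ℕ => (fun w => p.eval w)^[r + 1] z)}

/-- The set of 2×2 matrices with bounded orbit under the matrix polynomial. -/
def filledJuliaMat (p : Polynomial ℂ) : Set (Matrix (Fin 2) (Fin 2) ℂ) :=
  {M | Bornology.IsBounded
    (Set.range fun r : ℕ => (fun N : Matrix (Fin 2) (Fin 2) ℂ => Polynomial.aeval N p)^[r + 1] M)}

namespace Stmt5Aux

abbrev Mat := Matrix (Fin 2) (Fin 2) ℂ

lemma entry_le_norm (A : Mat) (i j : Fin 2) : ‖A i j‖ ≤ ‖A‖ := by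
  rw [Matrix.frobenius_norm_def]
  have h0 : (0:ℝ) ≤ ‖A i j‖ ^ (2:ℝ) := Real.rpow_nonneg (norm_nonneg _) _
  have h1 : ‖A i j‖ ^ (2:ℝ) ≤ ∑ i', ∑ j', ‖A i' j'‖ ^ (2:ℝ) := by
    calc ‖A i j‖ ^ (2:ℝ) ≤ ∑ j', ‖A i j'‖ ^ (2:ℝ) :=
          Finset.single_le_sum (fun _ _ => Real.rpow_nonneg (norm_nonneg _) _)
            (Finset.mem_univ j)
      _ ≤ ∑ i', ∑ j', ‖A i' j'‖ ^ (2:ℝ) :=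
          Finset.single_le_sum
            (fun _ _ => Finset.sum_nonneg fun _ _ => Real.rpow_nonneg (norm_nonneg _) _)
            (Finset.mem_univ i)
  calc ‖A i j‖ = (‖A i j‖ ^ (2:ℝ)) ^ (1/2:ℝ) := by
        rw [← Real.rpow_mul (norm_nonneg _)]
        norm_num
    _ ≤ (∑ i', ∑ j', ‖A i' j'‖ ^ (2:ℝ)) ^ (1/2:ℝ) :=
        Real.rpow_le_rpow h0 h1 (by norm_num)

lemma conj_pow (Q : GL (Fin 2) ℂ) (N : Mat) (n : ℕ) :
    ((Q : Mat) * N * ((Q⁻¹ : GL (Fin 2) ℂ) : Mat)) ^ n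
      = (Q : Mat) * N ^ n * ((Q⁻¹ : GL (Fin 2) ℂ) : Mat) := by
  induction n with
  | zero => rw [pow_zero, pow_zero, mul_one, Units.mul_inv]
  | succ n ih =>
    rw [pow_succ, ih, pow_succ]
    have h : ((Q⁻¹ : GL (Fin 2) ℂ) : Mat) * (Q : Mat) = 1 := Units.inv_mul _
    calc (Q : Mat) * N ^ n * ↑Q⁻¹ * ((Q : Mat) * N * ↑Q⁻¹)
        = (Q : Mat) * N ^ n * (↑Q⁻¹ * (Q : Mat)) * N * ↑Q⁻¹ := by
          simp only [mul_assoc]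
      _ = (Q : Mat) * (N ^ n * N) * ↑Q⁻¹ := by rw [h]; simp only [mul_one, mul_assoc]

lemma conj_aeval (q : Polynomial ℂ) (Q : GL (Fin 2) ℂ) (N : Mat) :
    aeval ((Q : Mat) * N * ((Q⁻¹ : GL (Fin 2) ℂ) : Mat)) q
      = (Q : Mat) * aeval N q * ((Q⁻¹ : GL (Fin 2) ℂ) : Mat) := by
  induction q using Polynomial.induction_on' with
  | add f g hf hg => rw [map_add, map_add, hf, hg, mul_add, add_mul]
  | monomial n c =>
    rw [aeval_monomial, aeval_monomial, conj_pow, ← Algebra.smul_def, ← Algebra.smul_def,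
      mul_smul_comm, smul_mul_assoc]

lemma tri_pow (a b : ℂ) (n : ℕ) : ∃ c, !![a,b;0,a] ^ n = !![a^n, c; 0, a^n] := by
  induction n with
  | zero => exact ⟨0, by rw [pow_zero, pow_zero, Matrix.one_fin_two]⟩
  | succ n ih =>
    obtain ⟨c, hc⟩ := ih
    refine ⟨a ^ n * b + c * a, ?_⟩
    rw [pow_succ, hc, Matrix.mul_fin_two]
    congr 1 <;> ring

lemma tri_aeval (q : Polynomial ℂ) (a b : ℂ) :
    ∃ c, aeval !![a,b;0,a] q = !![q.eval a, c; 0, q.eval a] := by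
  induction q using Polynomial.induction_on' with
  | add f g hf hg =>
    obtain ⟨c, hc⟩ := hf
    obtain ⟨d, hd⟩ := hg
    refine ⟨c + d, ?_⟩
    rw [map_add, hc, hd, eval_add]
    ext i j
    fin_cases i <;> fin_cases j <;> simp
  | monomial n co =>
    obtain ⟨c, hc⟩ := tri_pow a b n
    refine ⟨co * c, ?_⟩
    rw [aeval_monomial, hc, eval_monomial, ← Algebra.smul_def]
    ext i j
    fin_cases i <;> fin_cases j <;> simp

lemma tri_iter (p : Polynomial ℂ) (l : ℂ) (r : ℕ) :
    ∃ c, (fun N : Mat => aeval N p)^[r] !![l,1;0,l]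
      = !![(fun w => p.eval w)^[r] l, c; 0, (fun w => p.eval w)^[r] l] := by
  induction r with
  | zero => exact ⟨1, rfl⟩
  | succ r ih =>
    obtain ⟨c, hc⟩ := ih
    obtain ⟨d, hd⟩ := tri_aeval p ((fun w => p.eval w)^[r] l) c
    refine ⟨d, ?_⟩
    rw [Function.iterate_succ_apply', hc, hd, Function.iterate_succ_apply']

lemma conj_iter (p : Polynomial ℂ) (Q : GL (Fin 2) ℂ) (N : Mat) (r : ℕ) :
    (fun N : Mat => aeval N p)^[r] ((Q : Mat) * N * ((Q⁻¹ : GL (Fin 2) ℂ) : Mat))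
      = (Q : Mat) * (fun N : Mat => aeval N p)^[r] N * ((Q⁻¹ : GL (Fin 2) ℂ) : Mat) := by
  induction r with
  | zero => rfl
  | succ r ih =>
    rw [Function.iterate_succ_apply', ih, Function.iterate_succ_apply']
    exact conj_aeval p Q _

end Stmt5Aux

open Stmt5Aux in
/-- If a non-diagonalizable matrix has bounded orbit, its eigenvalue lies in the
filled Julia set. -/
theorem stmt5 (p : Polynomial ℂ) (hdeg : 2 ≤ p.natDegree) (l : ℂ) (Q : GL (Fin 2) ℂ)
    (hM : ((Q : Matrix (Fin 2) (Fin 2) ℂ) * !![l, 1; 0, l]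
        * ((Q⁻¹ : GL (Fin 2) ℂ) : Matrix (Fin 2) (Fin 2) ℂ)) ∈ filledJuliaMat p) :
    l ∈ filledJulia p := by
  rw [filledJulia, Set.mem_setOf_eq, isBounded_iff_forall_norm_le]
  rw [filledJuliaMat, Set.mem_setOf_eq, isBounded_iff_forall_norm_le] at hM
  obtain ⟨C, hC⟩ := hM
  refine ⟨‖((Q⁻¹ : GL (Fin 2) ℂ) : Mat)‖ * C * ‖(Q : Mat)‖, ?_⟩
  rintro x ⟨r, rfl⟩
  obtain ⟨c, hc⟩ := tri_iter p l (r + 1)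
  have h2 := conj_iter p Q !![l,1;0,l] (r + 1)
  rw [hc] at h2
  set T : Mat := !![(fun w => p.eval w)^[r+1] l, c; 0, (fun w => p.eval w)^[r+1] l] with hT
  have hQQ : ((Q⁻¹ : GL (Fin 2) ℂ) : Mat) * (Q : Mat) = 1 := Units.inv_mul _
  have h3 : T = ((Q⁻¹ : GL (Fin 2) ℂ) : Mat)
      * (fun N : Mat => aeval N p)^[r+1] ((Q : Mat) * !![l,1;0,l] * ↑Q⁻¹) * (Q : Mat) := by
    rw [h2]
    calc T = (↑Q⁻¹ * (Q : Mat)) * T * (↑Q⁻¹ * (Q : Mat)) := by rw [hQQ]; simp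
      _ = ↑Q⁻¹ * ((Q : Mat) * T * ↑Q⁻¹) * (Q : Mat) := by simp only [mul_assoc]
  have h4 : ‖T‖ ≤ ‖((Q⁻¹ : GL (Fin 2) ℂ) : Mat)‖ * C * ‖(Q : Mat)‖ := by
    rw [h3]
    calc ‖↑Q⁻¹ * (fun N : Mat => aeval N p)^[r+1] ((Q : Mat) * !![l,1;0,l] * ↑Q⁻¹) * (Q : Mat)‖
        ≤ ‖(↑Q⁻¹ : Mat) * (fun N : Mat => aeval N p)^[r+1] ((Q : Mat) * !![l,1;0,l] * ↑Q⁻¹)‖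
            * ‖(Q : Mat)‖ := Matrix.frobenius_norm_mul _ _
      _ ≤ (‖(↑Q⁻¹ : Mat)‖ * ‖(fun N : Mat => aeval N p)^[r+1] ((Q : Mat) * !![l,1;0,l] * ↑Q⁻¹)‖)
            * ‖(Q : Mat)‖ :=
          mul_le_mul_of_nonneg_right (Matrix.frobenius_norm_mul _ _) (norm_nonneg _)
      _ ≤ (‖(↑Q⁻¹ : Mat)‖ * C) * ‖(Q : Mat)‖ :=
          mul_le_mul_of_nonneg_right
            (mul_le_mul_of_nonneg_left (hC _ ⟨r, rfl⟩) (norm_nonneg _)) (norm_nonneg _)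
  have h5 : ‖(fun w => p.eval w)^[r+1] l‖ ≤ ‖T‖ := by
    have := entry_le_norm T 0 0
    simpa [hT] using this
  exact h5.trans h4
end
end

section
/- Let p be a complex polynomial with deg(p) ≥ 2, P the corresponding matrix polynomial on 2×2 matrices, and K_P the set of matrices with bounded P-orbit. Then the closure of K_P equals the set of all 2×2 matrices whose eigenvalues all lie in the filled Julia set K_p. -/
open Matrix Polynomial Filter

attribute [local instance] Matrix.frobeniusNormedAddCommGroup Matrix.frobeniusNormedSpace

noncomputable section

namespace StmtAux

abbrev Mat := Matrix (Fin 2) (Fin 2) ℂ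

/-- iterated composition polynomials: `pit p r` evaluates to `(p.eval)^[r+1]`. -/
def pit (p : Polynomial ℂ) : ℕ → Polynomial ℂ
  | 0 => p
  | r + 1 => (pit p r).comp p

lemma pit_eval (p : Polynomial ℂ) : ∀ r z, (fun w => p.eval w)^[r + 1] z = (pit p r).eval z := by
  intro r
  induction r with
  | zero => intro z; simp [pit]
  | succ r ih =>
    intro z
    rw [show r + 1 + 1 = r + 1 + 1 from rfl, Function.iterate_succ_apply]
    show (fun w => p.eval w)^[r + 1] (p.eval z) = _
    rw [ih (p.eval z)]
    simp [pit, eval_comp]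

lemma pit_aeval (p : Polynomial ℂ) :
    ∀ r (M : Mat), (fun N : Mat => Polynomial.aeval N p)^[r + 1] M = aeval M (pit p r) := by
  intro r
  induction r with
  | zero => intro M; simp [pit]
  | succ r ih =>
    intro M
    rw [Function.iterate_succ_apply]
    show (fun N : Mat => Polynomial.aeval N p)^[r + 1] (aeval M p) = _
    rw [ih (aeval M p)]
    simp [pit, aeval_comp]

lemma mem_filledJulia_iff (p : Polynomial ℂ) (z : ℂ) :
    z ∈ filledJulia p ↔ ∃ C, ∀ r : ℕ, ‖(pit p r).eval z‖ ≤ C := by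
  unfold filledJulia
  rw [Set.mem_setOf_eq, isBounded_iff_forall_norm_le]
  constructor
  · rintro ⟨C, hC⟩
    exact ⟨C, fun r => by rw [← pit_eval]; exact hC _ (Set.mem_range_self r)⟩
  · rintro ⟨C, hC⟩
    refine ⟨C, ?_⟩
    rintro x ⟨r, rfl⟩
    simp only []
    rw [pit_eval]; exact hC r

lemma mem_filledJuliaMat_iff (p : Polynomial ℂ) (M : Mat) :
    M ∈ filledJuliaMat p ↔ ∃ C, ∀ r : ℕ, ‖aeval M (pit p r)‖ ≤ C := by
  unfold filledJuliaMat
  rw [Set.mem_setOf_eq, isBounded_iff_forall_norm_le]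
  constructor
  · rintro ⟨C, hC⟩
    exact ⟨C, fun r => by rw [← pit_aeval]; exact hC _ (Set.mem_range_self r)⟩
  · rintro ⟨C, hC⟩
    refine ⟨C, ?_⟩
    rintro x ⟨r, rfl⟩
    show ‖(fun N : Mat => Polynomial.aeval N p)^[r+1] M‖ ≤ C
    rw [pit_aeval]; exact hC r


section Escape

variable {p : Polynomial ℂ} (hdeg : 2 ≤ p.natDegree)

/-- an escape radius -/
def Rad (p : Polynomial ℂ) : ℝ :=
  max 1 ((2 + ∑ i ∈ Finset.range p.natDegree, ‖p.coeff i‖) / ‖p.leadingCoeff‖)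

lemma one_le_Rad : 1 ≤ Rad p := le_max_left _ _

lemma Rad_pos : 0 < Rad p := lt_of_lt_of_le one_pos one_le_Rad

include hdeg in
lemma p_ne_zero : p ≠ 0 := by
  intro h
  rw [h] at hdeg
  simp at hdeg

include hdeg in
lemma grow {z : ℂ} (hz : Rad p ≤ ‖z‖) : 2 * ‖z‖ ≤ ‖p.eval z‖ := by
  have hlc : ‖p.leadingCoeff‖ > 0 := by
    have h : p.leadingCoeff ≠ 0 := leadingCoeff_ne_zero.mpr (p_ne_zero hdeg)
    exact norm_pos_iff.mpr h
  have hz1 : (1:ℝ) ≤ ‖z‖ := le_trans one_le_Rad hz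
  have hz0 : (0:ℝ) < ‖z‖ := lt_of_lt_of_le one_pos hz1
  set d := p.natDegree with hd
  set S := ∑ i ∈ Finset.range d, ‖p.coeff i‖ with hS
  have hS0 : 0 ≤ S := Finset.sum_nonneg fun i _ => norm_nonneg _
  -- main coefficient bound
  have key : ‖p.leadingCoeff‖ * ‖z‖ ≥ 2 + S := by
    have h2 : (2 + S) / ‖p.leadingCoeff‖ ≤ ‖z‖ := le_trans (le_max_right _ _) hz
    calc 2 + S = ((2 + S) / ‖p.leadingCoeff‖) * ‖p.leadingCoeff‖ := by
          rw [div_mul_cancel₀ _ (ne_of_gt hlc)]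
    _ ≤ ‖z‖ * ‖p.leadingCoeff‖ := by
        apply mul_le_mul_of_nonneg_right h2 (le_of_lt hlc)
    _ = ‖p.leadingCoeff‖ * ‖z‖ := mul_comm _ _
  -- eval = lead + rest
  have heval : p.eval z = p.leadingCoeff * z ^ d + ∑ i ∈ Finset.range d, p.coeff i * z ^ i := by
    rw [eval_eq_sum_range, Finset.sum_range_succ]
    rw [Polynomial.leadingCoeff]
    ring
  have hrest : ‖∑ i ∈ Finset.range d, p.coeff i * z ^ i‖ ≤ S * ‖z‖ ^ (d - 1) := by
    calc ‖∑ i ∈ Finset.range d, p.coeff i * z ^ i‖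
        ≤ ∑ i ∈ Finset.range d, ‖p.coeff i * z ^ i‖ := norm_sum_le _ _
    _ ≤ ∑ i ∈ Finset.range d, ‖p.coeff i‖ * ‖z‖ ^ (d - 1) := by
        apply Finset.sum_le_sum
        intro i hi
        rw [norm_mul, norm_pow]
        apply mul_le_mul_of_nonneg_left _ (norm_nonneg _)
        have hi' := Finset.mem_range.mp hi
        apply pow_le_pow_right₀ hz1
        omega
    _ = S * ‖z‖ ^ (d - 1) := by rw [← Finset.sum_mul]
  have hlead : ‖p.leadingCoeff * z ^ d‖ = ‖p.leadingCoeff‖ * ‖z‖ ^ d := by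
    rw [norm_mul, norm_pow]
  have hdd : d = (d - 1) + 1 := by omega
  have hpow : ‖z‖ ^ d = ‖z‖ ^ (d - 1) * ‖z‖ := by
    conv_lhs => rw [hdd]
    rw [pow_succ]
  have h1 : 2 * ‖z‖ ≤ (‖p.leadingCoeff‖ * ‖z‖ - S) * ‖z‖ ^ (d-1) := by
    have hp1 : ‖z‖ ^ 1 ≤ ‖z‖ ^ (d - 1) := pow_le_pow_right₀ hz1 (by omega)
    rw [pow_one] at hp1
    nlinarith [pow_pos hz0 (d-1)]
  calc 2 * ‖z‖ ≤ (‖p.leadingCoeff‖ * ‖z‖ - S) * ‖z‖ ^ (d-1) := h1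
  _ = ‖p.leadingCoeff‖ * ‖z‖ ^ d - S * ‖z‖ ^ (d-1) := by rw [hpow]; ring
  _ ≤ ‖p.leadingCoeff * z ^ d‖ - ‖∑ i ∈ Finset.range d, p.coeff i * z ^ i‖ := by
      rw [hlead]; linarith [hrest]
  _ ≤ ‖p.eval z‖ := by
      rw [heval]
      have h3 : ‖p.leadingCoeff * z ^ d‖ ≤
          ‖p.leadingCoeff * z ^ d + ∑ i ∈ Finset.range d, p.coeff i * z ^ i‖ +
            ‖∑ i ∈ Finset.range d, p.coeff i * z ^ i‖ := by
        simpa [add_sub_cancel_right] using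
          norm_sub_le (p.leadingCoeff * z ^ d + ∑ i ∈ Finset.range d, p.coeff i * z ^ i)
            (∑ i ∈ Finset.range d, p.coeff i * z ^ i)
      linarith

end Escape
section Dyn

variable {p : Polynomial ℂ} (hdeg : 2 ≤ p.natDegree)

include hdeg in
lemma grow_iter : ∀ (k : ℕ) {w : ℂ}, Rad p < ‖w‖ →
    2 ^ k * ‖w‖ ≤ ‖(fun z => p.eval z)^[k] w‖ ∧ Rad p < ‖(fun z => p.eval z)^[k] w‖ := by
  intro k
  induction k with
  | zero => intro w hw; simpa using hw
  | succ k ih =>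
    intro w hw
    obtain ⟨h1, h2⟩ := ih hw
    rw [Function.iterate_succ_apply']
    have hg := grow hdeg (le_of_lt h2)
    constructor
    · calc 2 ^ (k+1) * ‖w‖ = 2 * (2 ^ k * ‖w‖) := by ring
      _ ≤ 2 * ‖(fun z => p.eval z)^[k] w‖ := by linarith
      _ ≤ _ := hg
    · have := Rad_pos (p := p)
      calc Rad p < ‖(fun z => p.eval z)^[k] w‖ := h2
      _ ≤ 2 * ‖(fun z => p.eval z)^[k] w‖ := by linarith [norm_nonneg ((fun z => p.eval z)^[k] w)]
      _ ≤ _ := hg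

include hdeg in
lemma not_mem_of_escape {z : ℂ} {n : ℕ} (h : Rad p < ‖(fun w => p.eval w)^[n] z‖) :
    z ∉ filledJulia p := by
  intro hz
  rw [filledJulia, Set.mem_setOf_eq, isBounded_iff_forall_norm_le] at hz
  obtain ⟨C, hC⟩ := hz
  obtain ⟨k, hk⟩ := pow_unbounded_of_one_lt C (by norm_num : (1:ℝ) < 2)
  have h2 := (grow_iter hdeg (k+1) h).1
  rw [← Function.iterate_add_apply] at h2
  have hb : ‖(fun w => p.eval w)^[k + 1 + n] z‖ ≤ C := by
    have : k + 1 + n = (k + n) + 1 := by omega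
    rw [this]
    exact hC _ (Set.mem_range_self (k + n))
  have h3 : (1:ℝ) ≤ ‖(fun w => p.eval w)^[n] z‖ :=
    le_trans one_le_Rad (le_of_lt h)
  have h4 : (2:ℝ) ^ (k+1) ≤ 2 ^ (k+1) * ‖(fun w => p.eval w)^[n] z‖ := by
    nlinarith [pow_pos (by norm_num : (0:ℝ) < 2) (k+1)]
  have h5 : (2:ℝ)^k ≤ 2^(k+1) := by
    apply pow_le_pow_right₀ <;> norm_num
  linarith

include hdeg in
lemma mem_filledJulia_iff_forall {z : ℂ} :
    z ∈ filledJulia p ↔ ∀ n : ℕ, ‖(fun w => p.eval w)^[n] z‖ ≤ Rad p := by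
  constructor
  · intro hz n
    by_contra h
    exact not_mem_of_escape hdeg (lt_of_not_ge h) hz
  · intro h
    rw [filledJulia, Set.mem_setOf_eq, isBounded_iff_forall_norm_le]
    exact ⟨Rad p, by rintro x ⟨r, rfl⟩; exact h (r+1)⟩

include hdeg in
lemma isClosed_filledJulia : IsClosed (filledJulia p) := by
  rw [← isOpen_compl_iff]
  rw [isOpen_iff_mem_nhds]
  intro z hz
  rw [Set.mem_compl_iff, mem_filledJulia_iff_forall hdeg] at hz
  push_neg at hz
  obtain ⟨n, hn⟩ := hz
  have hcont : Continuous fun w : ℂ => ‖(fun u => p.eval u)^[n] w‖ := by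
    exact (p.continuous_aeval.iterate n).norm
  have hopen : IsOpen {w : ℂ | Rad p < ‖(fun u => p.eval u)^[n] w‖} :=
    isOpen_lt continuous_const hcont
  apply Filter.mem_of_superset (hopen.mem_nhds hn)
  intro w hw
  exact not_mem_of_escape hdeg hw

include hdeg in
lemma mem_backward {z : ℂ} (h : p.eval z ∈ filledJulia p) : z ∈ filledJulia p := by
  rw [mem_filledJulia_iff_forall hdeg] at h ⊢
  intro n
  cases n with
  | zero =>
    by_contra hc
    have h0 := (grow_iter hdeg 1 (lt_of_not_ge hc)).2
    simp only [Function.iterate_one] at h0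
    exact absurd (h 0) (by simpa using not_le_of_gt h0)
  | succ n =>
    rw [Function.iterate_succ_apply]
    exact h n

include hdeg in
lemma mem_backward_iter {z : ℂ} : ∀ (m : ℕ), (fun w => p.eval w)^[m] z ∈ filledJulia p →
    z ∈ filledJulia p := by
  intro m
  induction m generalizing z with
  | zero => intro h; exact h
  | succ m ih =>
    intro h
    rw [Function.iterate_succ_apply] at h
    exact mem_backward hdeg (ih h)

include hdeg in
lemma mem_forward {z : ℂ} (h : z ∈ filledJulia p) : p.eval z ∈ filledJulia p := by
  rw [mem_filledJulia_iff_forall hdeg] at h ⊢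
  intro n
  rw [← Function.iterate_succ_apply]
  exact h (n+1)

end Dyn
section TwoPoints

variable {p : Polynomial ℂ} (hdeg : 2 ≤ p.natDegree)

lemma fixed_mem {μ : ℂ} (h : p.eval μ = μ) : μ ∈ filledJulia p := by
  have hit : ∀ n, (fun w => p.eval w)^[n] μ = μ := by
    intro n
    induction n with
    | zero => rfl
    | succ n ih => rw [Function.iterate_succ_apply', ih]; exact h
  rw [filledJulia, Set.mem_setOf_eq, isBounded_iff_forall_norm_le]
  refine ⟨‖μ‖, ?_⟩
  rintro x ⟨r, rfl⟩
  show ‖(fun w => p.eval w)^[r + 1] μ‖ ≤ ‖μ‖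
  rw [hit]

include hdeg in
lemma degree_pos : 0 < p.degree := by
  have : p ≠ 0 := p_ne_zero hdeg
  rw [Polynomial.degree_eq_natDegree this]
  exact_mod_cast by omega

include hdeg in
lemma exists_fixed : ∃ μ : ℂ, p.eval μ = μ := by
  have hd : (p - X).degree = p.degree := by
    apply Polynomial.degree_sub_eq_left_of_degree_lt
    rw [Polynomial.degree_X]
    calc (1 : WithBot ℕ) < 2 := by norm_cast
    _ ≤ (p.natDegree : WithBot ℕ) := by exact_mod_cast hdeg
    _ = p.degree := (Polynomial.degree_eq_natDegree (p_ne_zero hdeg)).symm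
  obtain ⟨z, hz⟩ := Complex.exists_root (f := p - X) (by rw [hd]; exact degree_pos hdeg)
  refine ⟨z, ?_⟩
  have := hz
  rw [Polynomial.IsRoot, Polynomial.eval_sub, Polynomial.eval_X, sub_eq_zero] at this
  exact this

include hdeg in
lemma two_points : ∃ a b : ℂ, a ∈ filledJulia p ∧ b ∈ filledJulia p ∧ a ≠ b := by
  obtain ⟨μ, hμfix⟩ := exists_fixed hdeg
  have hμ : μ ∈ filledJulia p := fixed_mem hμfix
  set q : Polynomial ℂ := p - C μ with hq
  have hqdeg : q.degree = p.degree := by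
    apply Polynomial.degree_sub_eq_left_of_degree_lt
    calc (C μ).degree ≤ 0 := Polynomial.degree_C_le
    _ < p.degree := degree_pos hdeg
  have hqnd : q.natDegree = p.natDegree := Polynomial.natDegree_eq_of_degree_eq hqdeg
  have hq0 : q ≠ 0 := by
    intro h
    rw [h] at hqnd
    simp only [Polynomial.natDegree_zero] at hqnd
    omega
  by_cases hall : ∀ z ∈ q.roots, z = μ
  · -- q = C lc * (X - C μ)^d
    have hcard : q.roots.card = q.natDegree :=
      (Polynomial.splits_iff_card_roots).mp (IsAlgClosed.splits q)
    have hrep : q.roots = Multiset.replicate q.natDegree μ := by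
      rw [Multiset.eq_replicate]
      exact ⟨hcard, hall⟩
    have hfac : C q.leadingCoeff * (q.roots.map fun a => X - C a).prod = q :=
      Polynomial.C_leadingCoeff_mul_prod_multiset_X_sub_C hcard
    rw [hrep, Multiset.map_replicate, Multiset.prod_replicate] at hfac
    set d := q.natDegree with hd
    have hdd : 2 ≤ d := by omega
    set lc := q.leadingCoeff with hlc
    have hlc0 : lc ≠ 0 := Polynomial.leadingCoeff_ne_zero.mpr hq0
    have heval : ∀ z : ℂ, p.eval z = μ + lc * (z - μ) ^ d := by
      intro z
      have := congrArg (fun r => Polynomial.eval z r) hfac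
      simp only [Polynomial.eval_mul, Polynomial.eval_C, Polynomial.eval_pow,
        Polynomial.eval_sub, Polynomial.eval_X, hq, Polynomial.eval_sub, Polynomial.eval_C] at this
      rw [this]; ring
    -- invariant disk around μ
    set t₀ : ℝ := min 1 ‖lc‖⁻¹ with ht₀
    have hlcpos : 0 < ‖lc‖ := norm_pos_iff.mpr hlc0
    have ht₀pos : 0 < t₀ := lt_min one_pos (by positivity)
    have ht₀1 : t₀ ≤ 1 := min_le_left _ _
    have ht₀lc : ‖lc‖ * t₀ ≤ 1 := by
      calc ‖lc‖ * t₀ ≤ ‖lc‖ * ‖lc‖⁻¹ := by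
            apply mul_le_mul_of_nonneg_left (min_le_right _ _) (le_of_lt hlcpos)
      _ = 1 := mul_inv_cancel₀ (ne_of_gt hlcpos)
    have hinv : ∀ z : ℂ, ‖z - μ‖ ≤ t₀ → ‖p.eval z - μ‖ ≤ t₀ := by
      intro z hz
      rw [heval z]
      have h1 : ‖μ + lc * (z - μ) ^ d - μ‖ = ‖lc‖ * ‖z - μ‖ ^ d := by
        rw [show μ + lc * (z - μ) ^ d - μ = lc * (z - μ) ^ d by ring, norm_mul, norm_pow]
      rw [h1]
      have h2 : ‖z - μ‖ ^ d ≤ t₀ ^ d := pow_le_pow_left₀ (norm_nonneg _) hz d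
      have h3 : t₀ ^ d ≤ t₀ * t₀ := by
        calc t₀ ^ d ≤ t₀ ^ 2 := pow_le_pow_of_le_one (le_of_lt ht₀pos) ht₀1 hdd
        _ = t₀ * t₀ := sq t₀
      nlinarith
    set z₁ : ℂ := μ + (t₀ : ℂ) with hz₁
    have hz₁ne : z₁ ≠ μ := by
      rw [hz₁]
      intro h
      have : (t₀ : ℂ) = 0 := by linear_combination h
      exact (ne_of_gt ht₀pos) (by exact_mod_cast this)
    have horbit : ∀ n, ‖(fun w => p.eval w)^[n] z₁ - μ‖ ≤ t₀ := by
      intro n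
      induction n with
      | zero =>
        simp only [Function.iterate_zero, id_eq, hz₁, add_sub_cancel_left]
        rw [Complex.norm_real]
        rw [Real.norm_of_nonneg (le_of_lt ht₀pos)]
      | succ n ih =>
        rw [Function.iterate_succ_apply']
        exact hinv _ ih
    have hz₁mem : z₁ ∈ filledJulia p := by
      rw [filledJulia, Set.mem_setOf_eq, isBounded_iff_forall_norm_le]
      refine ⟨‖μ‖ + t₀, ?_⟩
      rintro x ⟨r, rfl⟩
      have := horbit (r+1)
      have h4 : ‖(fun w => p.eval w)^[r+1] z₁‖ ≤ ‖μ‖ + ‖(fun w => p.eval w)^[r+1] z₁ - μ‖ := by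
        have := norm_add_le μ ((fun w => p.eval w)^[r+1] z₁ - μ)
        simpa [add_sub_cancel] using this
      linarith
    exact ⟨μ, z₁, hμ, hz₁mem, (Ne.symm hz₁ne)⟩
  · push_neg at hall
    obtain ⟨z, hzr, hzne⟩ := hall
    have hzeval : p.eval z = μ := by
      have := (Polynomial.mem_roots hq0).mp hzr
      rw [Polynomial.IsRoot, hq, Polynomial.eval_sub, Polynomial.eval_C, sub_eq_zero] at this
      exact this
    have hzmem : z ∈ filledJulia p := by
      apply mem_backward hdeg
      rw [hzeval]; exact hμ
    exact ⟨μ, z, hμ, hzmem, Ne.symm hzne⟩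

end TwoPoints
section NonIsolated

variable {p : Polynomial ℂ} (hdeg : 2 ≤ p.natDegree)

include hdeg in
lemma not_isolated {μ : ℂ} (hμ : μ ∈ filledJulia p) {ε : ℝ} (hε : 0 < ε) :
    ∃ lam, lam ∈ filledJulia p ∧ lam ≠ μ ∧ ‖lam - μ‖ ≤ ε := by
  by_contra hiso
  push_neg at hiso
  set R := Rad p with hR
  have hRpos : 0 < R := Rad_pos
  set f : ℂ → ℂ := fun w => p.eval w with hf
  -- monotone escape
  have mono : ∀ (z : ℂ) (n k : ℕ), R < ‖f^[n] z‖ → n ≤ k → R < ‖f^[k] z‖ := by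
    intro z n k hn hnk
    have : k = (k - n) + n := by omega
    rw [this, Function.iterate_add_apply]
    exact (grow_iter hdeg (k - n) hn).2
  -- the sphere escapes uniformly
  have hsph : ∀ z ∈ Metric.sphere μ ε, ∃ n, R < ‖f^[n] z‖ := by
    intro z hz
    have hzμ : z ≠ μ := by
      intro h
      rw [Metric.mem_sphere, h, dist_self] at hz
      exact hε.ne hz
    have hzd : ‖z - μ‖ = ε := by rw [← dist_eq_norm]; exact hz
    have hzK : z ∉ filledJulia p := fun hzK =>
      absurd (le_of_eq hzd) (not_le_of_gt (hiso z hzK hzμ))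
    rw [mem_filledJulia_iff_forall hdeg] at hzK
    push_neg at hzK
    obtain ⟨n, hn⟩ := hzK
    exact ⟨n, hn⟩
  -- extract finite subcover
  have hUopen : ∀ n : ℕ, IsOpen {w : ℂ | R < ‖f^[n] w‖} := fun n =>
    isOpen_lt continuous_const ((p.continuous_aeval.iterate n).norm)
  have hcov : Metric.sphere μ ε ⊆ ⋃ n : ℕ, {w : ℂ | R < ‖f^[n] w‖} := by
    intro z hz
    obtain ⟨n, hn⟩ := hsph z hz
    exact Set.mem_iUnion.mpr ⟨n, hn⟩
  obtain ⟨t, ht⟩ := (isCompact_sphere μ ε).elim_finite_subcover _ hUopen hcov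
  set N := t.sup id with hN
  have hNesc : ∀ z ∈ Metric.sphere μ ε, R < ‖f^[N] z‖ := by
    intro z hz
    obtain ⟨n, hnt, hzn⟩ := Set.mem_iUnion₂.mp (ht hz)
    exact mono z n N hzn (Finset.le_sup (f := id) hnt)
  set m := 2 + N with hm
  have hmesc : ∀ z ∈ Metric.sphere μ ε, 4 * R ≤ ‖f^[m] z‖ := by
    intro z hz
    have h1 := (grow_iter hdeg 2 (hNesc z hz)).1
    rw [← Function.iterate_add_apply] at h1
    have : (2:ℝ)^2 * ‖f^[N] z‖ = 4 * ‖f^[N] z‖ := by norm_num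
    rw [this] at h1
    have := hNesc z hz
    calc 4 * R ≤ 4 * ‖f^[N] z‖ := by linarith
    _ ≤ _ := h1
  -- pick a target value in the filled Julia set different from f^[m] μ
  have hw₀ : ∃ w₀, w₀ ∈ filledJulia p ∧ w₀ ≠ f^[m] μ := by
    obtain ⟨a, b, ha, hb, hab⟩ := two_points hdeg
    by_cases h : a = f^[m] μ
    · exact ⟨b, hb, fun hc => hab (by rw [h, hc])⟩
    · exact ⟨a, ha, h⟩
  obtain ⟨w₀, hw₀K, hw₀ne⟩ := hw₀
  have hw₀R : ‖w₀‖ ≤ R := by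
    have := (mem_filledJulia_iff_forall hdeg).mp hw₀K 0
    simpa using this
  have hμR : ∀ n, ‖f^[n] μ‖ ≤ R := (mem_filledJulia_iff_forall hdeg).mp hμ
  -- f^[m] is a polynomial map
  have hpit : ∀ z : ℂ, f^[m] z = (pit p (N + 1)).eval z := by
    intro z
    have : m = (N + 1) + 1 := by omega
    rw [this, ← pit_eval]
  by_cases hzero : ∃ z ∈ Metric.closedBall μ ε, f^[m] z = w₀
  · obtain ⟨z, hzball, hz2⟩ := hzero
    have hzK : z ∈ filledJulia p := by
      apply mem_backward_iter hdeg m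
      show f^[m] z ∈ filledJulia p
      rw [hz2]; exact hw₀K
    have hzμ : z ≠ μ := by
      intro h
      rw [h] at hz2
      exact hw₀ne hz2.symm
    have : ‖z - μ‖ ≤ ε := by rw [← dist_eq_norm]; exact Metric.mem_closedBall.mp hzball
    exact absurd this (not_le_of_gt (hiso z hzK hzμ))
  · push_neg at hzero
    set g : ℂ → ℂ := fun z => ((pit p (N + 1)).eval z - w₀)⁻¹ with hg
    have hne' : ∀ z ∈ Metric.closedBall μ ε, (pit p (N + 1)).eval z - w₀ ≠ 0 := by
      intro z hz
      rw [sub_ne_zero, ← hpit]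
      exact hzero z hz
    have hdiff : DifferentiableOn ℂ g (Metric.closedBall μ ε) := by
      apply DifferentiableOn.inv
      · exact ((pit p (N + 1)).differentiable.sub_const w₀).differentiableOn
      · exact hne'
    have hdiffcl : DiffContOnCl ℂ g (Metric.ball μ ε) := by
      apply DifferentiableOn.diffContOnCl
      rw [closure_ball μ hε.ne']
      exact hdiff
    have hbound : ∀ z ∈ frontier (Metric.ball μ ε), ‖g z‖ ≤ (3 * R)⁻¹ := by
      intro z hz
      rw [frontier_ball μ hε.ne'] at hz
      have h4 := hmesc z hz
      have hlow : 3 * R ≤ ‖f^[m] z - w₀‖ := by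
        have := norm_sub_norm_le (f^[m] z) w₀
        linarith
      have : ‖g z‖ = ‖f^[m] z - w₀‖⁻¹ := by
        rw [hg]
        simp only [norm_inv]
        rw [hpit z]
      rw [this]
      exact inv_anti₀ (by positivity) hlow
    have hμmem : μ ∈ closure (Metric.ball μ ε) := by
      rw [closure_ball μ hε.ne']
      exact Metric.mem_closedBall_self hε.le
    have hmax := Complex.norm_le_of_forall_mem_frontier_norm_le Metric.isBounded_ball
      hdiffcl hbound hμmem
    -- lower bound on ‖g μ‖
    have hup : ‖f^[m] μ - w₀‖ ≤ 2 * R := by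
      have := norm_sub_le (f^[m] μ) w₀
      have := hμR m
      linarith
    have hpos : 0 < ‖f^[m] μ - w₀‖ := by
      rw [norm_pos_iff, sub_ne_zero]
      exact fun h => hw₀ne h.symm
    have hgμ : ‖g μ‖ = ‖f^[m] μ - w₀‖⁻¹ := by
      rw [hg]
      simp only [norm_inv]
      rw [hpit μ]
    have h2R : (2 * R)⁻¹ ≤ ‖g μ‖ := by
      rw [hgμ]
      exact inv_anti₀ hpos hup
    have : (2 * R)⁻¹ ≤ (3 * R)⁻¹ := le_trans h2R hmax
    have hlt : (3 * R)⁻¹ < (2 * R)⁻¹ := by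
      apply inv_strictAnti₀ (by positivity)
      linarith
    linarith

end NonIsolated
section MatrixBasics

lemma entry_le (M : Mat) (i j : Fin 2) : ‖M i j‖ ≤ ‖M‖ := by
  rw [Matrix.frobenius_norm_def]
  have hterm : ∀ (k : Fin 2) (l : Fin 2), (0:ℝ) ≤ ‖M k l‖ ^ (2:ℝ) := fun k l =>
    Real.rpow_nonneg (norm_nonneg _) _
  have h1 : ‖M i j‖ ^ (2:ℝ) ≤ ∑ k : Fin 2, ∑ l : Fin 2, ‖M k l‖ ^ (2:ℝ) := by
    calc ‖M i j‖ ^ (2:ℝ) ≤ ∑ l : Fin 2, ‖M i l‖ ^ (2:ℝ) :=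
          Finset.single_le_sum (fun l _ => hterm i l) (Finset.mem_univ j)
    _ ≤ ∑ k : Fin 2, ∑ l : Fin 2, ‖M k l‖ ^ (2:ℝ) :=
          Finset.single_le_sum (f := fun k => ∑ l : Fin 2, ‖M k l‖ ^ (2:ℝ))
            (fun k _ => Finset.sum_nonneg fun l _ => hterm k l) (Finset.mem_univ i)
  have h2 : (‖M i j‖ ^ (2:ℝ)) ^ ((1:ℝ)/2) = ‖M i j‖ := by
    rw [← Real.rpow_mul (norm_nonneg _)]
    norm_num
  rw [← h2]
  exact Real.rpow_le_rpow (hterm i j) h1 (by norm_num)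

lemma CH2 (M : Mat) : M * M - M.trace • M + M.det • (1 : Mat) = 0 := by
  ext i j
  fin_cases i <;> fin_cases j <;>
    simp [Matrix.mul_apply, Fin.sum_univ_two, Matrix.trace_fin_two, Matrix.det_fin_two,
      Matrix.one_apply, smul_eq_mul] <;> ring

lemma detc (M : Mat) (μ : ℂ) :
    (μ • (1 : Mat) - M).det = μ ^ 2 - M.trace * μ + M.det := by
  simp [Matrix.det_fin_two, Matrix.trace_fin_two, Matrix.one_apply, smul_eq_mul]
  ring

lemma spec_iff (M : Mat) (μ : ℂ) :
    μ ∈ spectrum ℂ M ↔ μ ^ 2 - M.trace * μ + M.det = 0 := by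
  rw [spectrum.mem_iff, Algebra.algebraMap_eq_smul_one, Matrix.isUnit_iff_isUnit_det, detc,
    isUnit_iff_ne_zero, not_not]

lemma spec_norm_le {M : Mat} {μ : ℂ} (h : μ ∈ spectrum ℂ M) : ‖μ‖ ≤ 2 * ‖M‖ := by
  rw [spec_iff] at h
  rw [Matrix.trace_fin_two, Matrix.det_fin_two] at h
  have hfac : (μ - M 0 0) * (μ - M 1 1) = M 0 1 * M 1 0 := by linear_combination h
  have hnorm : ‖μ - M 0 0‖ * ‖μ - M 1 1‖ ≤ ‖M‖ * ‖M‖ := by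
    rw [← norm_mul, hfac, norm_mul]
    exact mul_le_mul (entry_le M 0 1) (entry_le M 1 0) (norm_nonneg _) (norm_nonneg _)
  have hM0 : (0:ℝ) ≤ ‖M‖ := norm_nonneg _
  by_cases h1 : ‖μ - M 0 0‖ ≤ ‖M‖
  · calc ‖μ‖ = ‖M 0 0 + (μ - M 0 0)‖ := by ring_nf
    _ ≤ ‖M 0 0‖ + ‖μ - M 0 0‖ := norm_add_le _ _
    _ ≤ ‖M‖ + ‖M‖ := add_le_add (entry_le M 0 0) h1
    _ = 2 * ‖M‖ := by ring
  · push_neg at h1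
    have h2 : ‖μ - M 1 1‖ ≤ ‖M‖ := by
      by_contra h2
      push_neg at h2
      nlinarith [norm_nonneg (μ - M 0 0), norm_nonneg (μ - M 1 1)]
    calc ‖μ‖ = ‖M 1 1 + (μ - M 1 1)‖ := by ring_nf
    _ ≤ ‖M 1 1‖ + ‖μ - M 1 1‖ := norm_add_le _ _
    _ ≤ ‖M‖ + ‖M‖ := add_le_add (entry_le M 1 1) h2
    _ = 2 * ‖M‖ := by ring

lemma spec_map {M : Mat} {μ : ℂ} (h : μ ∈ spectrum ℂ M) (q : Polynomial ℂ) :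
    q.eval μ ∈ spectrum ℂ (aeval M q) := by
  obtain ⟨s, hs⟩ := (Polynomial.dvd_iff_isRoot (p := q - C (q.eval μ)) (a := μ)).mpr (by simp)
  rw [spectrum.mem_iff]
  intro hunit
  have hrw : algebraMap ℂ Mat (q.eval μ) - aeval M q
      = -((M - algebraMap ℂ Mat μ) * aeval M s) := by
    have := congrArg (fun r => aeval M r) hs
    simp only [map_sub, _root_.map_mul, aeval_X, aeval_C] at this
    rw [← this, neg_sub]
  rw [hrw] at hunit
  rw [IsUnit.neg_iff, Matrix.isUnit_iff_isUnit_det, Matrix.det_mul] at hunit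
  have hdetu : IsUnit ((M - algebraMap ℂ Mat μ).det) := isUnit_of_mul_isUnit_left hunit
  rw [spectrum.mem_iff] at h
  apply h
  rw [Matrix.isUnit_iff_isUnit_det]
  rw [← neg_sub M ((algebraMap ℂ Mat) μ), Matrix.det_neg]
  simpa using hdetu

end MatrixBasics
section Lagrange

variable {p : Polynomial ℂ} (hdeg : 2 ≤ p.natDegree)

lemma aeval_eq_lin {α β : ℂ} (hne : α ≠ β) {M : Mat} (ht : M.trace = α + β)
    (hd : M.det = α * β) (q : Polynomial ℂ) :
    aeval M q = ((q.eval α - q.eval β) / (α - β)) • M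
      + ((α * q.eval β - β * q.eval α) / (α - β)) • (1 : Mat) := by
  have hab : α - β ≠ 0 := sub_ne_zero.mpr hne
  set a : ℂ := (q.eval α - q.eval β) / (α - β) with ha
  set b : ℂ := (α * q.eval β - β * q.eval α) / (α - β) with hb
  have hℓα : a * α + b = q.eval α := by
    rw [ha, hb]
    field_simp
    ring
  have hℓβ : a * β + b = q.eval β := by
    rw [ha, hb]
    field_simp
    ring
  have hd1 : (X - C α) ∣ (q - (C a * X + C b)) := by
    rw [Polynomial.dvd_iff_isRoot]
    simp only [Polynomial.IsRoot, Polynomial.eval_sub, Polynomial.eval_add, Polynomial.eval_mul,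
      Polynomial.eval_C, Polynomial.eval_X]
    rw [hℓα]
    ring
  have hd2 : (X - C β) ∣ (q - (C a * X + C b)) := by
    rw [Polynomial.dvd_iff_isRoot]
    simp only [Polynomial.IsRoot, Polynomial.eval_sub, Polynomial.eval_add, Polynomial.eval_mul,
      Polynomial.eval_C, Polynomial.eval_X]
    rw [hℓβ]
    ring
  have hcop : IsCoprime (X - C α) (X - C β) :=
    Polynomial.isCoprime_X_sub_C_of_isUnit_sub (isUnit_iff_ne_zero.mpr hab)
  obtain ⟨s, hs⟩ := hcop.mul_dvd hd1 hd2
  have hq : q = (X - C α) * (X - C β) * s + (C a * X + C b) := by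
    rw [← hs]; ring
  have hch : aeval M ((X - C α) * (X - C β)) = 0 := by
    have hexp : (X - C α) * (X - C β) = X ^ 2 - (C α + C β) * X + C α * C β := by ring
    rw [hexp]
    simp only [map_add, map_sub, _root_.map_mul, map_pow, aeval_X, aeval_C]
    have h1 : (algebraMap ℂ Mat) α + (algebraMap ℂ Mat) β = M.trace • (1 : Mat) := by
      rw [← map_add, ht, Algebra.algebraMap_eq_smul_one]
    have h2 : (algebraMap ℂ Mat) α * (algebraMap ℂ Mat) β = M.det • (1 : Mat) := by
      rw [← _root_.map_mul, hd, Algebra.algebraMap_eq_smul_one]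
    rw [h1, h2, smul_mul_assoc, one_mul, sq]
    exact CH2 M
  rw [hq]
  simp only [map_add, _root_.map_mul, aeval_X, aeval_C, hch, zero_mul, zero_add]
  rw [Algebra.algebraMap_eq_smul_one a, Algebra.algebraMap_eq_smul_one b,
    smul_mul_assoc, one_mul]

include hdeg in
lemma mem_mat_of_distinct {α β : ℂ} (hα : α ∈ filledJulia p) (hβ : β ∈ filledJulia p)
    (hne : α ≠ β) {M : Mat} (ht : M.trace = α + β) (hd : M.det = α * β) :
    M ∈ filledJuliaMat p := by
  set R := Rad p with hR
  have hR0 : (0:ℝ) ≤ R := le_of_lt Rad_pos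
  have hαR : ∀ r, ‖(pit p r).eval α‖ ≤ R := fun r => by
    rw [← pit_eval]
    exact (mem_filledJulia_iff_forall hdeg).mp hα (r+1)
  have hβR : ∀ r, ‖(pit p r).eval β‖ ≤ R := fun r => by
    rw [← pit_eval]
    exact (mem_filledJulia_iff_forall hdeg).mp hβ (r+1)
  have hab : (0:ℝ) < ‖α - β‖ := norm_pos_iff.mpr (sub_ne_zero.mpr hne)
  rw [mem_filledJuliaMat_iff]
  refine ⟨(2 * R * ‖M‖ + (‖α‖ + ‖β‖) * R * ‖(1:Mat)‖) / ‖α - β‖, fun r => ?_⟩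
  rw [aeval_eq_lin hne ht hd (pit p r)]
  set qα := (pit p r).eval α with hqα
  set qβ := (pit p r).eval β with hqβ
  have e1 : ‖qα - qβ‖ ≤ 2 * R := by
    have h := norm_sub_le qα qβ
    have := hαR r
    have := hβR r
    rw [← hqα, ← hqβ] at *
    linarith
  have e2 : ‖α * qβ - β * qα‖ ≤ (‖α‖ + ‖β‖) * R := by
    have h := norm_sub_le (α * qβ) (β * qα)
    rw [norm_mul, norm_mul] at h
    have h2 : ‖α‖ * ‖qβ‖ ≤ ‖α‖ * R := mul_le_mul_of_nonneg_left (hβR r) (norm_nonneg α)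
    have h3 : ‖β‖ * ‖qα‖ ≤ ‖β‖ * R := mul_le_mul_of_nonneg_left (hαR r) (norm_nonneg β)
    nlinarith
  calc ‖((qα - qβ) / (α - β)) • M + ((α * qβ - β * qα) / (α - β)) • (1:Mat)‖
      ≤ ‖((qα - qβ) / (α - β)) • M‖ + ‖((α * qβ - β * qα) / (α - β)) • (1:Mat)‖ :=
        norm_add_le _ _
  _ = ‖qα - qβ‖ / ‖α - β‖ * ‖M‖ + ‖α * qβ - β * qα‖ / ‖α - β‖ * ‖(1:Mat)‖ := by
        rw [norm_smul, norm_smul, norm_div, norm_div]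
  _ ≤ (2 * R) / ‖α - β‖ * ‖M‖ + ((‖α‖ + ‖β‖) * R) / ‖α - β‖ * ‖(1:Mat)‖ := by
        gcongr
  _ = (2 * R * ‖M‖ + (‖α‖ + ‖β‖) * R * ‖(1:Mat)‖) / ‖α - β‖ := by ring

include hdeg in
lemma scalar_mem {μ : ℂ} (hμ : μ ∈ filledJulia p) : μ • (1 : Mat) ∈ filledJuliaMat p := by
  have hev : ∀ q : Polynomial ℂ, aeval (μ • (1 : Mat)) q = q.eval μ • (1 : Mat) := by
    intro q
    rw [← Algebra.algebraMap_eq_smul_one, Polynomial.aeval_algebraMap_apply_eq_algebraMap_eval,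
      Algebra.algebraMap_eq_smul_one]
  rw [mem_filledJuliaMat_iff]
  refine ⟨Rad p * ‖(1:Mat)‖, fun r => ?_⟩
  rw [hev, norm_smul]
  apply mul_le_mul_of_nonneg_right _ (norm_nonneg _)
  rw [← pit_eval]
  exact (mem_filledJulia_iff_forall hdeg).mp hμ (r+1)

lemma exists_spec_pair (M : Mat) : ∃ α β : ℂ, M.trace = α + β ∧ M.det = α * β := by
  obtain ⟨s, hs⟩ := IsAlgClosed.exists_pow_nat_eq (k := ℂ) (M.trace ^ 2 - 4 * M.det)
    (n := 2) (by norm_num)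
  refine ⟨(M.trace + s) / 2, (M.trace - s) / 2, by ring, ?_⟩
  have h : (M.trace + s) / 2 * ((M.trace - s) / 2) = (M.trace ^ 2 - s ^ 2) / 4 := by ring
  rw [h, hs]
  ring

lemma mem_spec_of_pair {M : Mat} {α β : ℂ} (ht : M.trace = α + β) (hd : M.det = α * β) :
    α ∈ spectrum ℂ M ∧ β ∈ spectrum ℂ M := by
  constructor <;> (rw [spec_iff, ht, hd]; ring)

omit hdeg in
lemma spec_subset_of_mem {M : Mat} (h : M ∈ filledJuliaMat p) {μ : ℂ}
    (hμ : μ ∈ spectrum ℂ M) : μ ∈ filledJulia p := by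
  rw [mem_filledJuliaMat_iff] at h
  obtain ⟨C, hC⟩ := h
  rw [mem_filledJulia_iff]
  refine ⟨2 * C, fun r => ?_⟩
  have := spec_norm_le (spec_map hμ (pit p r))
  have := hC r
  linarith

end Lagrange
section Jordan

variable {p : Polynomial ℂ} (hdeg : 2 ≤ p.natDegree)

include hdeg in
lemma jordan_mem_closure {μ : ℂ} (hμ : μ ∈ filledJulia p) {M : Mat}
    (ht : M.trace = 2 * μ) (hd : M.det = μ ^ 2) (hne : M ≠ μ • (1 : Mat)) :
    M ∈ closure (filledJuliaMat p) := by
  set N : Mat := M - μ • (1 : Mat) with hN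
  have hN0 : N ≠ 0 := sub_ne_zero.mpr hne
  have hNN : N * N = 0 := by
    have h1 : N * N = M * M - (2 * μ) • M + (μ ^ 2) • (1 : Mat) := by
      rw [hN, sub_mul, mul_sub, mul_sub, smul_mul_assoc, mul_smul_comm, one_mul, mul_one,
        smul_mul_smul_comm, one_mul]
      module
    rw [h1, ← ht, ← hd]
    exact CH2 M
  obtain ⟨i₀, j₀, hij⟩ : ∃ i j, N i j ≠ 0 := by
    by_contra h
    push_neg at h
    exact hN0 (by ext i j; simpa using h i j)
  set u : Fin 2 → ℂ := fun i => N i j₀ with hu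
  have hu0 : u ≠ 0 := fun h => hij (by simpa [hu] using congrFun h i₀)
  have hNu : N *ᵥ u = 0 := by
    funext i
    have : (N *ᵥ u) i = (N * N) i j₀ := by
      simp [Matrix.mulVec, dotProduct, Matrix.mul_apply, hu]
    rw [this, hNN]
    simp
  set cc : ℂ := ∑ k : Fin 2, (starRingEnd ℂ) (u k) * u k with hcc
  have hccre : cc = ((∑ k : Fin 2, Complex.normSq (u k) : ℝ) : ℂ) := by
    rw [hcc]
    push_cast
    congr 1
    funext k
    rw [mul_comm, Complex.mul_conj]
  have hcc0 : cc ≠ 0 := by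
    rw [hccre]
    rw [Ne, Complex.ofReal_eq_zero]
    intro h
    have hterm : ∀ k ∈ (Finset.univ : Finset (Fin 2)), (0:ℝ) ≤ Complex.normSq (u k) :=
      fun k _ => Complex.normSq_nonneg _
    obtain ⟨i, hi⟩ : ∃ i, u i ≠ 0 := by
      by_contra hc
      push_neg at hc
      exact hu0 (funext hc)
    have := (Finset.sum_eq_zero_iff_of_nonneg hterm).mp h i (Finset.mem_univ i)
    exact hi (Complex.normSq_eq_zero.mp this)
  set Q : Mat := cc⁻¹ • Matrix.vecMulVec u (fun k => (starRingEnd ℂ) (u k)) with hQ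
  have htrQ : Q.trace = 1 := by
    rw [hQ, Matrix.trace_smul, Matrix.trace_fin_two]
    simp only [Matrix.vecMulVec_apply]
    rw [smul_eq_mul]
    have : u 0 * (starRingEnd ℂ) (u 0) + u 1 * (starRingEnd ℂ) (u 1) = cc := by
      rw [hcc, Fin.sum_univ_two]
      ring
    rw [this, inv_mul_cancel₀ hcc0]
  have hQu : Q *ᵥ u = u := by
    rw [hQ, Matrix.smul_mulVec]
    have hVu : Matrix.vecMulVec u (fun k => (starRingEnd ℂ) (u k)) *ᵥ u = cc • u := by
      funext i
      simp only [Matrix.mulVec, dotProduct, Matrix.vecMulVec_apply, Pi.smul_apply,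
        smul_eq_mul, hcc, Finset.sum_mul, Finset.mul_sum]
      apply Finset.sum_congr rfl
      intro k _
      ring
    rw [hVu, smul_smul, inv_mul_cancel₀ hcc0, one_smul]
  have hMu : M *ᵥ u = μ • u := by
    have hM : M = N + μ • (1 : Mat) := by rw [hN]; abel
    rw [hM, Matrix.add_mulVec, hNu, Matrix.smul_mulVec, Matrix.one_mulVec]
    simp
  refine Metric.mem_closure_iff.mpr ?_
  intro ε hε
  have hQnorm : (0:ℝ) < ‖Q‖ + 1 := by positivity
  obtain ⟨lam, hlamK, hlamne, hlamd⟩ := not_isolated hdeg hμ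
    (show (0:ℝ) < ε / (2 * (‖Q‖ + 1)) by positivity)
  set M' : Mat := M + (lam - μ) • Q with hM'
  have htr' : M'.trace = lam + μ := by
    rw [hM', Matrix.trace_add, Matrix.trace_smul, htrQ, ht]
    simp only [smul_eq_mul, mul_one]
    ring
  have hM'u : M' *ᵥ u = lam • u := by
    rw [hM', Matrix.add_mulVec, hMu, Matrix.smul_mulVec, hQu, ← add_smul]
    congr 1
    ring
  have hdet' : M'.det = lam * μ := by
    have hzero : (lam • (1 : Mat) - M') *ᵥ u = 0 := by
      rw [Matrix.sub_mulVec, Matrix.smul_mulVec, Matrix.one_mulVec, hM'u, sub_self]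
    have hdet0 : (lam • (1 : Mat) - M').det = 0 :=
      (Matrix.exists_mulVec_eq_zero_iff.mp ⟨u, hu0, hzero⟩)
    rw [detc, htr'] at hdet0
    linear_combination hdet0
  have hM'K : M' ∈ filledJuliaMat p :=
    mem_mat_of_distinct hdeg hlamK hμ hlamne htr' hdet'
  refine ⟨M', hM'K, ?_⟩
  rw [dist_eq_norm]
  have : M - M' = -((lam - μ) • Q) := by rw [hM']; abel
  rw [this, norm_neg, norm_smul]
  calc ‖lam - μ‖ * ‖Q‖ ≤ (ε / (2 * (‖Q‖ + 1))) * ‖Q‖ := by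
        apply mul_le_mul_of_nonneg_right hlamd (norm_nonneg _)
  _ < ε := by
      rw [div_mul_eq_mul_div, div_lt_iff₀ (by positivity)]
      nlinarith [norm_nonneg Q]

end Jordan
end StmtAux

open StmtAux

/-- The closure of the set of matrices with bounded orbit is the set of matrices
all of whose eigenvalues lie in the filled Julia set. -/
theorem stmt8 (p : Polynomial ℂ) (hdeg : 2 ≤ p.natDegree) :
    closure (filledJuliaMat p)
      = {M : Matrix (Fin 2) (Fin 2) ℂ | ∀ μ ∈ spectrum ℂ M, μ ∈ filledJulia p} := by
  ext M
  constructor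
  · -- closure ⊆ spectral condition
    intro hM μ hspec
    rw [← (isClosed_filledJulia hdeg).closure_eq]
    rw [Metric.mem_closure_iff]
    intro ε hε
    set K : ℝ := ‖M‖ + 1 with hK
    have hKpos : (0:ℝ) < K := by positivity
    set δ : ℝ := min 1 (ε ^ 2 / (16 * K)) with hδ
    have hδpos : (0:ℝ) < δ := lt_min one_pos (by positivity)
    have hδ1 : δ ≤ 1 := min_le_left _ _
    have hδε : 8 * K * δ ≤ ε ^ 2 / 2 := by
      have h1 : δ ≤ ε ^ 2 / (16 * K) := min_le_right _ _
      calc 8 * K * δ ≤ 8 * K * (ε ^ 2 / (16 * K)) := by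
            apply mul_le_mul_of_nonneg_left h1 (by positivity)
      _ = ε ^ 2 / 2 := by field_simp; ring
    obtain ⟨M', hM'K, hdist⟩ := Metric.mem_closure_iff.mp hM δ hδpos
    rw [dist_eq_norm] at hdist
    -- entry bounds
    have hentry : ∀ i j, ‖M i j - M' i j‖ ≤ δ := by
      intro i j
      have := entry_le (M - M') i j
      rw [Matrix.sub_apply] at this
      linarith
    have hentryM : ∀ i j, ‖M i j‖ ≤ K := fun i j => by
      have := entry_le M i j
      rw [hK]; linarith
    have hentryM' : ∀ i j, ‖M' i j‖ ≤ K := by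
      intro i j
      have h1 := hentry i j
      have h2 := entry_le M i j
      have h3 := norm_sub_norm_le (M' i j) (M i j)
      rw [norm_sub_rev] at h3
      rw [hK]
      linarith
    -- trace and det bounds
    have htr : ‖M.trace - M'.trace‖ ≤ 2 * δ := by
      rw [Matrix.trace_fin_two, Matrix.trace_fin_two]
      have h := norm_add_le (M 0 0 - M' 0 0) (M 1 1 - M' 1 1)
      have e : M 0 0 + M 1 1 - (M' 0 0 + M' 1 1) = (M 0 0 - M' 0 0) + (M 1 1 - M' 1 1) := by
        ring
      rw [e]
      have := hentry 0 0
      have := hentry 1 1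
      linarith
    have hprod : ∀ (a b a' b' : ℂ), ‖a‖ ≤ K → ‖b'‖ ≤ K → ‖a - a'‖ ≤ δ → ‖b - b'‖ ≤ δ →
        ‖a * b - a' * b'‖ ≤ 2 * K * δ := by
      intro a b a' b' ha hb' haa hbb
      have e : a * b - a' * b' = a * (b - b') + (a - a') * b' := by ring
      rw [e]
      have h1 := norm_add_le (a * (b - b')) ((a - a') * b')
      rw [norm_mul, norm_mul] at h1
      have h2 : ‖a‖ * ‖b - b'‖ ≤ K * δ :=
        mul_le_mul ha hbb (norm_nonneg _) (le_of_lt hKpos)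
      have h3 : ‖a - a'‖ * ‖b'‖ ≤ δ * K :=
        mul_le_mul haa hb' (norm_nonneg _) (le_of_lt hδpos)
      nlinarith
    have hdet : ‖M.det - M'.det‖ ≤ 4 * K * δ := by
      rw [Matrix.det_fin_two, Matrix.det_fin_two]
      have e : M 0 0 * M 1 1 - M 0 1 * M 1 0 - (M' 0 0 * M' 1 1 - M' 0 1 * M' 1 0)
          = (M 0 0 * M 1 1 - M' 0 0 * M' 1 1) - (M 0 1 * M 1 0 - M' 0 1 * M' 1 0) := by ring
      rw [e]
      have h1 := norm_sub_le (M 0 0 * M 1 1 - M' 0 0 * M' 1 1)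
        (M 0 1 * M 1 0 - M' 0 1 * M' 1 0)
      have h2 := hprod (M 0 0) (M 1 1) (M' 0 0) (M' 1 1) (hentryM 0 0) (hentryM' 1 1)
        (hentry 0 0) (hentry 1 1)
      have h3 := hprod (M 0 1) (M 1 0) (M' 0 1) (M' 1 0) (hentryM 0 1) (hentryM' 1 0)
        (hentry 0 1) (hentry 1 0)
      linarith
    -- μ bound
    have hμb : ‖μ‖ ≤ 2 * K := by
      have := spec_norm_le hspec
      rw [hK]
      have := norm_nonneg M
      linarith
    -- roots of M'
    obtain ⟨α, β, htr', hdet'⟩ := exists_spec_pair M'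
    have hspecs := mem_spec_of_pair htr' hdet'
    have hαK : α ∈ filledJulia p := spec_subset_of_mem hM'K hspecs.1
    have hβK : β ∈ filledJulia p := spec_subset_of_mem hM'K hspecs.2
    -- key product estimate
    have hμeq : μ ^ 2 - M.trace * μ + M.det = 0 := (spec_iff M μ).mp hspec
    have hfac : (μ - α) * (μ - β) = (M.trace - M'.trace) * μ + (M'.det - M.det) := by
      rw [htr', hdet'] at *
      linear_combination hμeq
    have hprodsmall : ‖(μ - α) * (μ - β)‖ ≤ ε ^ 2 / 2 := by
      rw [hfac]
      have h1 := norm_add_le ((M.trace - M'.trace) * μ) (M'.det - M.det)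
      rw [norm_mul] at h1
      have h2 : ‖M.trace - M'.trace‖ * ‖μ‖ ≤ 2 * δ * (2 * K) :=
        mul_le_mul htr hμb (norm_nonneg _) (by positivity)
      have h3 : ‖M'.det - M.det‖ ≤ 4 * K * δ := by
        rw [norm_sub_rev]
        exact hdet
      calc ‖(M.trace - M'.trace) * μ + (M'.det - M.det)‖
          ≤ 2 * δ * (2 * K) + 4 * K * δ := by linarith
      _ = 8 * K * δ := by ring
      _ ≤ ε ^ 2 / 2 := hδε
    rw [norm_mul] at hprodsmall
    by_cases hcase : ‖μ - α‖ ≤ ‖μ - β‖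
    · refine ⟨α, hαK, ?_⟩
      rw [dist_eq_norm]
      have hsq : ‖μ - α‖ ^ 2 ≤ ε ^ 2 / 2 := by
        have : ‖μ - α‖ * ‖μ - α‖ ≤ ‖μ - α‖ * ‖μ - β‖ :=
          mul_le_mul_of_nonneg_left hcase (norm_nonneg _)
        nlinarith
      nlinarith [norm_nonneg (μ - α)]
    · push_neg at hcase
      refine ⟨β, hβK, ?_⟩
      rw [dist_eq_norm]
      have hsq : ‖μ - β‖ ^ 2 ≤ ε ^ 2 / 2 := by
        have : ‖μ - β‖ * ‖μ - β‖ ≤ ‖μ - α‖ * ‖μ - β‖ :=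
          mul_le_mul_of_nonneg_right (le_of_lt hcase) (norm_nonneg _)
        nlinarith
      nlinarith [norm_nonneg (μ - β)]
  · -- spectral condition ⊆ closure
    intro hM
    obtain ⟨α, β, htr, hdet⟩ := exists_spec_pair M
    have hspecs := mem_spec_of_pair htr hdet
    have hαK : α ∈ filledJulia p := hM α hspecs.1
    have hβK : β ∈ filledJulia p := hM β hspecs.2
    by_cases hab : α = β
    · subst hab
      by_cases hsc : M = α • (1 : Matrix (Fin 2) (Fin 2) ℂ)
      · rw [hsc]
        exact subset_closure (scalar_mem hdeg hαK)
      · exact jordan_mem_closure hdeg hαK (by rw [htr]; ring) (by rw [hdet]; ring) hsc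
    · exact subset_closure (mem_mat_of_distinct hdeg hαK hβK hab htr hdet)
end
end

section
/- Let p be a complex polynomial with deg(p) ≥ 2, P the corresponding matrix polynomial, and K_P the set of 2×2 matrices with bounded P-orbit. If M is a diagonalizable matrix with both eigenvalues in the interior of K_p, then M has an open neighborhood contained in K_P; in particular M lies in the interior of K_P. -/
open Matrix Polynomial Filter
open Metric

attribute [local instance] Matrix.frobeniusNormedAddCommGroup Matrix.frobeniusNormedSpace

noncomputable section

/-! ### Auxiliary definitions and lemmas -/

/-- Iterates of a polynomial, as polynomials. -/
def pit (p : ℂ[X]) : ℕ → ℂ[X]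
  | 0 => X
  | (n+1) => (pit p n).comp p

lemma pit_eval (p : ℂ[X]) (n : ℕ) (z : ℂ) :
    (pit p n).eval z = (fun w => p.eval w)^[n] z := by
  induction n generalizing z with
  | zero => simp [pit]
  | succ n ih =>
    rw [Function.iterate_succ_apply]
    simp only [pit, Polynomial.eval_comp]
    exact ih _

lemma pit_aeval (p : ℂ[X]) (n : ℕ) (M : Matrix (Fin 2) (Fin 2) ℂ) :
    Polynomial.aeval M (pit p n)
      = (fun N : Matrix (Fin 2) (Fin 2) ℂ => Polynomial.aeval N p)^[n] M := by
  induction n generalizing M with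
  | zero => simp [pit]
  | succ n ih =>
    rw [Function.iterate_succ_apply]
    simp only [pit, Polynomial.aeval_comp]
    exact ih _

lemma growth (p : ℂ[X]) (hdeg : 2 ≤ p.natDegree) :
    ∃ R₀ : ℝ, 1 ≤ R₀ ∧ ∀ z : ℂ, R₀ ≤ ‖z‖ → 2 * ‖z‖ ≤ ‖p.eval z‖ := by
  have hq : 0 < p.divX.degree := by
    rw [← Polynomial.natDegree_pos_iff_degree_pos, Polynomial.natDegree_divX_eq_natDegree_tsub_one]
    omega
  have hz : Tendsto (fun z : ℂ => ‖z‖) (comap (fun z : ℂ => ‖z‖) atTop) atTop :=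
    tendsto_comap
  have h3 := (Polynomial.tendsto_norm_atTop p.divX hq hz).eventually_ge_atTop 3
  have h0 := hz.eventually_ge_atTop ‖p.coeff 0‖
  have key : ∀ᶠ z : ℂ in comap (fun z : ℂ => ‖z‖) atTop, 2 * ‖z‖ ≤ ‖p.eval z‖ := by
    filter_upwards [h3, h0] with z h3 h0
    have hev : p.eval z = p.divX.eval z * z + p.coeff 0 := by
      conv_lhs => rw [← Polynomial.divX_mul_X_add p]
      simp
    have hu : ‖p.divX.eval z * z‖ ≤ ‖p.divX.eval z * z + p.coeff 0‖ + ‖p.coeff 0‖ := by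
      simpa using norm_add_le (p.divX.eval z * z + p.coeff 0) (-p.coeff 0)
    have hu2 : 3 * ‖z‖ ≤ ‖p.divX.eval z * z‖ := by
      rw [norm_mul]
      exact mul_le_mul_of_nonneg_right h3 (norm_nonneg z)
    rw [hev]
    linarith
  obtain ⟨i, -, hi⟩ := (atTop_basis.comap (fun z : ℂ => ‖z‖)).eventually_iff.mp key
  refine ⟨max i 1, le_max_right _ _, fun z hz' => ?_⟩
  exact hi (by simpa using le_trans (le_max_left i 1) hz')

lemma julia_iterate_mem (p : ℂ[X]) {z : ℂ} (hz : z ∈ filledJulia p) (n : ℕ) :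
    (fun w => p.eval w)^[n] z ∈ filledJulia p := by
  have hzb : Bornology.IsBounded (Set.range fun r : ℕ => (fun w => p.eval w)^[r + 1] z) := hz
  refine Bornology.IsBounded.subset hzb ?_
  rintro _ ⟨r, rfl⟩
  refine ⟨r + n, ?_⟩
  show (fun w => p.eval w)^[r + n + 1] z = (fun w => p.eval w)^[r + 1] ((fun w => p.eval w)^[n] z)
  rw [← Function.iterate_add_apply]
  congr 1
  omega

lemma julia_bound (p : ℂ[X]) (hdeg : 2 ≤ p.natDegree) :
    ∃ R : ℝ, 1 ≤ R ∧ ∀ z ∈ filledJulia p, ∀ n, ‖(fun w => p.eval w)^[n] z‖ ≤ R := by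
  obtain ⟨R₀, hR₀1, hgrow⟩ := growth p hdeg
  have base : ∀ z ∈ filledJulia p, ‖z‖ ≤ R₀ := by
    intro z hz
    by_contra hc
    push_neg at hc
    have grow : ∀ n, 2 ^ n * ‖z‖ ≤ ‖(fun w => p.eval w)^[n] z‖ := by
      intro n
      induction n with
      | zero => simp
      | succ n ih =>
        have h1 : (1 : ℝ) ≤ 2 ^ n := one_le_pow₀ one_le_two
        have hn : R₀ ≤ ‖(fun w => p.eval w)^[n] z‖ := by
          nlinarith [norm_nonneg z]
        rw [Function.iterate_succ_apply']
        have := hgrow _ hn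
        calc 2 ^ (n+1) * ‖z‖ = 2 * (2 ^ n * ‖z‖) := by ring
          _ ≤ 2 * ‖(fun w => p.eval w)^[n] z‖ := by linarith
          _ ≤ _ := this
    have hzb : Bornology.IsBounded (Set.range fun r : ℕ => (fun w => p.eval w)^[r + 1] z) := hz
    obtain ⟨Cb, hCb⟩ := isBounded_iff_forall_norm_le.mp hzb
    obtain ⟨n, hn⟩ := pow_unbounded_of_one_lt Cb (one_lt_two : (1:ℝ) < 2)
    have h1 : ‖(fun w => p.eval w)^[n + 1] z‖ ≤ Cb := hCb _ ⟨n, rfl⟩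
    have h2 := grow (n + 1)
    have h3 : (2:ℝ) ^ n ≤ 2 ^ (n+1) := by
      apply pow_le_pow_right₀ one_le_two (Nat.le_succ n)
    have hz1 : 1 ≤ ‖z‖ := le_trans hR₀1 hc.le
    have hp : (0:ℝ) < 2 ^ (n+1) := pow_pos (by norm_num) _
    have h4 : (2:ℝ)^(n+1) * 1 ≤ 2^(n+1) * ‖z‖ := by nlinarith
    linarith
  refine ⟨R₀, hR₀1, fun z hz n => base _ (julia_iterate_mem p hz n)⟩

lemma deriv_bound (q : ℂ[X]) {s R : ℝ} (hs : 0 < s) (c : ℂ)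
    (hc : ∀ z ∈ closedBall c (4*s), ‖q.eval z‖ ≤ R) :
    ∀ x ∈ closedBall c (2*s), ‖(derivative q).eval x‖ ≤ (2*R+1)/s := by
  intro x hx
  rw [← Polynomial.deriv]
  have hsub : ball x s ⊆ closedBall c (4*s) := by
    intro z hz
    rw [mem_ball] at hz
    rw [mem_closedBall] at hx ⊢
    have := dist_triangle z x c
    linarith
  refine Complex.norm_deriv_le_div_of_mapsTo_ball
    ((q.differentiable.differentiableOn)) ?_ hs
  intro z hz
  rw [mem_closedBall]
  refine le_of_lt ?_
  calc dist (q.eval z) (q.eval x) ≤ ‖q.eval z‖ + ‖q.eval x‖ := dist_le_norm_add_norm _ _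
    _ ≤ R + R := add_le_add (hc _ (hsub hz)) (hc _ (hsub (mem_ball_self hs)))
    _ < 2*R+1 := by linarith

lemma mvt_bound (q : ℂ[X]) {s R : ℝ} (hs : 0 < s) (c : ℂ)
    (hc : ∀ z ∈ closedBall c (4*s), ‖q.eval z‖ ≤ R)
    {x y : ℂ} (hx : x ∈ closedBall c (2*s)) (hy : y ∈ closedBall c (2*s)) :
    ‖q.eval x - q.eval y‖ ≤ ((2*R+1)/s) * ‖x - y‖ := by
  exact Convex.norm_image_sub_le_of_norm_deriv_le
    (f := fun z => q.eval z) (s := closedBall c (2*s)) (C := (2*R+1)/s)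
    (fun z _ => q.differentiable.differentiableAt)
    (fun z hz => by rw [Polynomial.deriv]; exact deriv_bound q hs c hc z hz)
    (convex_closedBall _ _) hy hx

lemma exists_factor (M : Matrix (Fin 2) (Fin 2) ℂ) :
    ∃ μ₁ μ₂ : ℂ, M.charpoly = (X - C μ₁) * (X - C μ₂) ∧
      trace M = μ₁ + μ₂ ∧ det M = μ₁ * μ₂ := by
  have hsplit : M.charpoly.Splits := IsAlgClosed.splits _
  have hcard : M.charpoly.roots.card = 2 := by
    rw [(Polynomial.splits_iff_card_roots).mp hsplit, Matrix.charpoly_natDegree_eq_dim,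
      Fintype.card_fin]
  obtain ⟨μ₁, μ₂, hr⟩ := Multiset.card_eq_two.mp hcard
  refine ⟨μ₁, μ₂, ?_, ?_, ?_⟩
  · have := hsplit.eq_prod_roots_of_monic M.charpoly_monic
    rw [hr] at this
    simpa using this
  · rw [Matrix.trace_eq_sum_roots_charpoly, hr]; simp
  · rw [Matrix.det_eq_prod_roots_charpoly, hr]; simp

lemma coeffs_lemma (M : Matrix (Fin 2) (Fin 2) ℂ) (μ₁ μ₂ : ℂ)
    (hfact : M.charpoly = (X - C μ₁) * (X - C μ₂)) (f : ℂ[X]) :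
    ∃ a b : ℂ,
      Polynomial.aeval M f = a • M + b • (1 : Matrix (Fin 2) (Fin 2) ℂ) ∧
      a * μ₁ + b = f.eval μ₁ ∧ a * μ₂ + b = f.eval μ₂ ∧
      (μ₁ = μ₂ → a = (derivative f).eval μ₁) := by
  set g := f %ₘ M.charpoly with hg
  have hmon := M.charpoly_monic
  have hdeg2 : M.charpoly.degree = 2 := by
    rw [Matrix.charpoly_degree_eq_dim, Fintype.card_fin]; rfl
  have hdg : g.natDegree ≤ 1 := by
    have hlt : g.degree < 2 := hdeg2 ▸ Polynomial.degree_modByMonic_lt f hmon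
    rcases eq_or_ne g 0 with h0 | h0
    · simp [h0]
    · have h2 : g.natDegree < 2 := by
        rw [Polynomial.natDegree_lt_iff_degree_lt h0]
        exact_mod_cast hlt
      omega
  obtain ⟨a, b, hgeq⟩ : ∃ a b : ℂ, g = C a * X + C b :=
    ⟨_, _, Polynomial.eq_X_add_C_of_natDegree_le_one hdg⟩
  have hch1 : M.charpoly.eval μ₁ = 0 := by rw [hfact]; simp
  have hch2 : M.charpoly.eval μ₂ = 0 := by rw [hfact]; simp
  have heq1 : f.eval μ₁ = a * μ₁ + b := by
    conv_lhs => rw [← Polynomial.modByMonic_add_div f M.charpoly]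
    rw [Polynomial.eval_add, Polynomial.eval_mul, hch1, zero_mul, add_zero, ← hg, hgeq]
    simp
  have heq2 : f.eval μ₂ = a * μ₂ + b := by
    conv_lhs => rw [← Polynomial.modByMonic_add_div f M.charpoly]
    rw [Polynomial.eval_add, Polynomial.eval_mul, hch2, zero_mul, add_zero, ← hg, hgeq]
    simp
  refine ⟨a, b, ?_, heq1.symm, heq2.symm, ?_⟩
  · rw [Matrix.aeval_eq_aeval_mod_charpoly, ← hg]
    rw [hgeq]
    simp only [map_add, _root_.map_mul, Polynomial.aeval_C, Polynomial.aeval_X,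
      Algebra.algebraMap_eq_smul_one]
    rw [smul_mul_assoc, one_mul]
  · intro h12
    have hdz : (derivative M.charpoly).eval μ₁ = 0 := by
      rw [hfact, ← h12]
      simp [derivative_mul]
    have hf : f = g + M.charpoly * (f /ₘ M.charpoly) := by
      conv_lhs => rw [← Polynomial.modByMonic_add_div f M.charpoly]
    have hd := congrArg (fun q => (derivative q).eval μ₁) hf
    simp only [derivative_add, derivative_mul, Polynomial.eval_add, Polynomial.eval_mul,
      hdz, hch1, zero_mul, add_zero] at hd
    rw [hd, hgeq]
    simp

lemma divdiff_bound {p' : ℂ[X]} (q : ℂ[X]) {s R : ℝ} (hs : 0 < s) (hR0 : 0 ≤ R) (l₁ l₂ : ℂ)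
    (hc₁ : closedBall l₁ (4*s) ⊆ filledJulia p') (hc₂ : closedBall l₂ (4*s) ⊆ filledJulia p')
    (hq : ∀ z ∈ filledJulia p', ‖q.eval z‖ ≤ R)
    {μ₁ μ₂ a : ℂ}
    (hμ₁ : μ₁ ∈ closedBall l₁ s ∪ closedBall l₂ s) (hμ₂ : μ₂ ∈ closedBall l₁ s ∪ closedBall l₂ s)
    (hdif : a * (μ₁ - μ₂) = q.eval μ₁ - q.eval μ₂)
    (hder : μ₁ = μ₂ → a = (derivative q).eval μ₁) :
    ‖a‖ ≤ (2*R+1)/s + 2*R/s := by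
  obtain ⟨c, hcS, hμ₁c⟩ : ∃ c, closedBall c (4*s) ⊆ filledJulia p' ∧ μ₁ ∈ closedBall c s := by
    rcases hμ₁ with h | h
    exacts [⟨l₁, hc₁, h⟩, ⟨l₂, hc₂, h⟩]
  have hqc : ∀ z ∈ closedBall c (4*s), ‖q.eval z‖ ≤ R := fun z hz => hq z (hcS hz)
  have hKd0 : (0:ℝ) ≤ (2*R+1)/s := by positivity
  have h2Rs : (0:ℝ) ≤ 2*R/s := by positivity
  by_cases h12 : μ₁ = μ₂
  · rw [hder h12]
    have hm : μ₁ ∈ closedBall c (2*s) := closedBall_subset_closedBall (by linarith) hμ₁c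
    have := deriv_bound q hs c hqc μ₁ hm
    linarith
  · rcases le_or_gt ‖μ₁ - μ₂‖ s with hle | hgt
    · have hμ₂c : μ₂ ∈ closedBall c (2*s) := by
        rw [mem_closedBall] at hμ₁c ⊢
        have h' : dist μ₂ μ₁ ≤ s := by rw [dist_eq_norm, norm_sub_rev]; exact hle
        have := dist_triangle μ₂ μ₁ c
        linarith
      have hmvt := mvt_bound q hs c hqc
        (closedBall_subset_closedBall (by linarith) hμ₁c) hμ₂c
      have hpos : 0 < ‖μ₁ - μ₂‖ := by
        rw [norm_pos_iff]; exact sub_ne_zero.mpr h12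
      have hm : ‖a‖ * ‖μ₁ - μ₂‖ ≤ ((2*R+1)/s) * ‖μ₁ - μ₂‖ := by
        rw [← norm_mul, hdif]; exact hmvt
      have h' : ‖a‖ ≤ (2*R+1)/s := le_of_mul_le_mul_right hm hpos
      linarith
    · have hq1 : ‖q.eval μ₁‖ ≤ R := hq _ (hcS (closedBall_subset_closedBall (by linarith) hμ₁c))
      have hq2 : ‖q.eval μ₂‖ ≤ R := by
        rcases hμ₂ with h | h
        exacts [hq _ (hc₁ (closedBall_subset_closedBall (by linarith) h)),
          hq _ (hc₂ (closedBall_subset_closedBall (by linarith) h))]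
      have hm : ‖a‖ * ‖μ₁ - μ₂‖ ≤ 2*R := by
        rw [← norm_mul, hdif]
        exact (norm_sub_le _ _).trans (by linarith)
      have h2 : ‖a‖ * s ≤ 2*R := by nlinarith [norm_nonneg a]
      have h' : ‖a‖ ≤ 2*R/s := (le_div_iff₀ hs).mpr h2
      linarith

lemma root_loc {τ d : ℂ} {δ s : ℝ} (hs : 0 < s)
    (hδpos : 0 < δ) (hδ1 : δ ≤ 1) (hδB : δ * ((‖τ‖ + ‖d‖ + 3) + 1) ≤ s^2)
    (l₁ l₂ : ℂ) (hτ : τ = l₁ + l₂) (hd : d = l₁*l₂) {t dt : ℂ}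
    (htr : ‖t - τ‖ < δ) (hdet : ‖dt - d‖ < δ) {μ ν : ℂ}
    (hμν : t = μ + ν) (hmul : dt = μ * ν) :
    μ ∈ closedBall l₁ s ∪ closedBall l₂ s := by
  set B : ℝ := ‖τ‖ + ‖d‖ + 3 with hB
  have htn : ‖t‖ ≤ ‖τ‖ + δ := by
    calc ‖t‖ = ‖(t - τ) + τ‖ := by ring_nf
      _ ≤ ‖t - τ‖ + ‖τ‖ := norm_add_le _ _
      _ ≤ ‖τ‖ + δ := by linarith
  have hdn : ‖dt‖ ≤ ‖d‖ + δ := by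
    calc ‖dt‖ = ‖(dt - d) + d‖ := by ring_nf
      _ ≤ ‖dt - d‖ + ‖d‖ := norm_add_le _ _
      _ ≤ ‖d‖ + δ := by linarith
  have hsq : ‖μ‖^2 ≤ (‖τ‖ + δ) * ‖μ‖ + (‖d‖ + δ) := by
    have hid : μ^2 = t * μ - dt := by rw [hμν, hmul]; ring
    calc ‖μ‖^2 = ‖μ^2‖ := by rw [norm_pow]
      _ = ‖t * μ - dt‖ := by rw [hid]
      _ ≤ ‖t * μ‖ + ‖dt‖ := norm_sub_le _ _
      _ = ‖t‖ * ‖μ‖ + ‖dt‖ := by rw [norm_mul]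
      _ ≤ (‖τ‖ + δ) * ‖μ‖ + (‖d‖ + δ) := by
          have := norm_nonneg μ
          nlinarith
  have hμB : ‖μ‖ ≤ B := by
    rcases le_or_gt ‖μ‖ 1 with h | h
    · have := norm_nonneg τ; have := norm_nonneg d; rw [hB]; linarith
    · nlinarith [norm_nonneg τ, norm_nonneg d, norm_nonneg μ]
  have hprod : ‖μ - l₁‖ * ‖μ - l₂‖ ≤ δ * (B + 1) := by
    have hid : (μ - l₁) * (μ - l₂) = (t - τ) * μ + (d - dt) := by
      rw [hμν, hmul, hτ, hd]; ring
    calc ‖μ - l₁‖ * ‖μ - l₂‖ = ‖(μ - l₁) * (μ - l₂)‖ := (norm_mul _ _).symm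
      _ = ‖(t - τ) * μ + (d - dt)‖ := by rw [hid]
      _ ≤ ‖t - τ‖ * ‖μ‖ + ‖dt - d‖ := by
          refine (norm_add_le _ _).trans ?_
          rw [norm_mul, norm_sub_rev d dt]
      _ ≤ δ * B + δ * 1 := by nlinarith [norm_nonneg μ, norm_nonneg (t - τ)]
      _ = δ * (B + 1) := by ring
  rcases le_or_gt ‖μ - l₁‖ s with h | h
  · left; rwa [mem_closedBall, dist_eq_norm]
  · right
    rw [mem_closedBall, dist_eq_norm]
    nlinarith [norm_nonneg (μ - l₂), hδB, hprod, hs]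

/-- A diagonalizable matrix with both eigenvalues in the interior of the filled Julia
set lies in the interior of the set of matrices with bounded orbit. -/
theorem stmt9 (p : Polynomial ℂ) (hdeg : 2 ≤ p.natDegree) (l₁ l₂ : ℂ)
    (h₁ : l₁ ∈ interior (filledJulia p)) (h₂ : l₂ ∈ interior (filledJulia p))
    (Q : GL (Fin 2) ℂ) :
    (∃ U : Set (Matrix (Fin 2) (Fin 2) ℂ), IsOpen U ∧
        ((Q : Matrix (Fin 2) (Fin 2) ℂ) * !![l₁, 0; 0, l₂]
          * ((Q⁻¹ : GL (Fin 2) ℂ) : Matrix (Fin 2) (Fin 2) ℂ)) ∈ U ∧ U ⊆ filledJuliaMat p) ∧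
      ((Q : Matrix (Fin 2) (Fin 2) ℂ) * !![l₁, 0; 0, l₂]
          * ((Q⁻¹ : GL (Fin 2) ℂ) : Matrix (Fin 2) (Fin 2) ℂ)) ∈ interior (filledJuliaMat p) := by
  set A : Matrix (Fin 2) (Fin 2) ℂ :=
    (Q : Matrix (Fin 2) (Fin 2) ℂ) * !![l₁, 0; 0, l₂]
      * ((Q⁻¹ : GL (Fin 2) ℂ) : Matrix (Fin 2) (Fin 2) ℂ) with hA
  have hQinv : ((Q⁻¹ : GL (Fin 2) ℂ) : Matrix (Fin 2) (Fin 2) ℂ)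
      * (Q : Matrix (Fin 2) (Fin 2) ℂ) = 1 := by
    exact_mod_cast Units.inv_mul Q
  set τ : ℂ := l₁ + l₂ with hτ
  set d : ℂ := l₁ * l₂ with hd
  have htrA : trace A = τ := by
    rw [hA, Matrix.trace_mul_cycle, hQinv, one_mul, Matrix.trace_fin_two_of]
  have hdetA : det A = d := by
    rw [hA, Matrix.det_mul, Matrix.det_mul, mul_comm, ← mul_assoc, ← Matrix.det_mul, hQinv]
    simp [Matrix.det_fin_two_of, hd]
  -- constants
  obtain ⟨R, hR1, hR⟩ := julia_bound p hdeg
  have hR0 : (0:ℝ) ≤ R := le_trans zero_le_one hR1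
  have hRp : ∀ z ∈ filledJulia p, ∀ n, ‖(pit p n).eval z‖ ≤ R := by
    intro z hz n
    rw [pit_eval]
    exact hR z hz n
  obtain ⟨ε₁, hε₁, hball₁⟩ := Metric.mem_nhds_iff.mp (mem_interior_iff_mem_nhds.mp h₁)
  obtain ⟨ε₂, hε₂, hball₂⟩ := Metric.mem_nhds_iff.mp (mem_interior_iff_mem_nhds.mp h₂)
  set s : ℝ := min ε₁ ε₂ / 5 with hs_def
  have hsmin : 0 < min ε₁ ε₂ := lt_min hε₁ hε₂
  have hs : 0 < s := by positivity
  have hc₁ : closedBall l₁ (4*s) ⊆ filledJulia p := by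
    refine subset_trans ?_ hball₁
    intro z hz
    rw [mem_closedBall] at hz
    rw [mem_ball]
    have hmin : min ε₁ ε₂ ≤ ε₁ := min_le_left _ _
    calc dist z l₁ ≤ 4*s := hz
      _ < 5*s := by linarith
      _ ≤ ε₁ := by rw [hs_def]; linarith
  have hc₂ : closedBall l₂ (4*s) ⊆ filledJulia p := by
    refine subset_trans ?_ hball₂
    intro z hz
    rw [mem_closedBall] at hz
    rw [mem_ball]
    have hmin : min ε₁ ε₂ ≤ ε₂ := min_le_right _ _
    calc dist z l₂ ≤ 4*s := hz
      _ < 5*s := by linarith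
      _ ≤ ε₂ := by rw [hs_def]; linarith
  set B : ℝ := ‖τ‖ + ‖d‖ + 3 with hB
  have hBpos : 0 < B + 1 := by
    have := norm_nonneg τ; have := norm_nonneg d
    rw [hB]; linarith
  set δ : ℝ := min 1 (s^2 / (B+1)) with hδdef
  have hδpos : 0 < δ := lt_min one_pos (by positivity)
  have hδ1 : δ ≤ 1 := min_le_left _ _
  have hδB : δ * (B + 1) ≤ s^2 := by
    have h := min_le_right 1 (s^2 / (B+1))
    calc δ * (B+1) ≤ (s^2 / (B+1)) * (B+1) := by nlinarith
      _ = s^2 := by field_simp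
  set CM : ℝ := ‖A‖ + 1 with hCM
  set Ka : ℝ := (2*R+1)/s + 2*R/s with hKa
  have hKa0 : 0 ≤ Ka := by rw [hKa]; positivity
  set CC : ℝ := Ka * CM + (R + Ka * R) * ‖(1 : Matrix (Fin 2) (Fin 2) ℂ)‖ with hCC
  set U : Set (Matrix (Fin 2) (Fin 2) ℂ) :=
    {M | ‖trace M - τ‖ < δ} ∩ {M | ‖det M - d‖ < δ} ∩ {M | ‖M‖ < CM} with hU
  have hUopen : IsOpen U := by
    refine IsOpen.inter (IsOpen.inter ?_ ?_) ?_
    · exact isOpen_lt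
        (Continuous.norm ((Continuous.matrix_trace continuous_id).sub continuous_const))
        continuous_const
    · exact isOpen_lt
        (Continuous.norm ((Continuous.matrix_det continuous_id).sub continuous_const))
        continuous_const
    · exact isOpen_lt continuous_norm continuous_const
  have hAU : A ∈ U := by
    refine ⟨⟨?_, ?_⟩, ?_⟩
    · show ‖trace A - τ‖ < δ
      rw [htrA, sub_self, norm_zero]; exact hδpos
    · show ‖det A - d‖ < δ
      rw [hdetA, sub_self, norm_zero]; exact hδpos
    · show ‖A‖ < CM
      rw [hCM]; linarith
  have hUsub : U ⊆ filledJuliaMat p := by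
    rintro M ⟨⟨htrM, hdetM⟩, hnM⟩
    have htrM : ‖trace M - τ‖ < δ := htrM
    have hdetM : ‖det M - d‖ < δ := hdetM
    have hnM : ‖M‖ < CM := hnM
    obtain ⟨μ₁, μ₂, hfact, htr2, hdet2⟩ := exists_factor M
    have hμ₁K : μ₁ ∈ closedBall l₁ s ∪ closedBall l₂ s :=
      root_loc hs hδpos hδ1 hδB l₁ l₂ hτ hd htrM hdetM htr2 hdet2
    have hμ₂K : μ₂ ∈ closedBall l₁ s ∪ closedBall l₂ s :=
      root_loc hs hδpos hδ1 hδB l₁ l₂ hτ hd htrM hdetM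
        (by rw [htr2]; ring) (by rw [hdet2]; ring)
    have hμ₁J : μ₁ ∈ filledJulia p := by
      rcases hμ₁K with h | h
      exacts [hc₁ (closedBall_subset_closedBall (by linarith) h),
        hc₂ (closedBall_subset_closedBall (by linarith) h)]
    have hμ₁R : ‖μ₁‖ ≤ R := by
      have := hR μ₁ hμ₁J 0
      simpa using this
    show Bornology.IsBounded
      (Set.range fun r : ℕ => (fun N : Matrix (Fin 2) (Fin 2) ℂ => Polynomial.aeval N p)^[r + 1] M)
    refine isBounded_iff_forall_norm_le.mpr ⟨CC, ?_⟩
    rintro _ ⟨r, rfl⟩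
    show ‖(fun N : Matrix (Fin 2) (Fin 2) ℂ => Polynomial.aeval N p)^[r + 1] M‖ ≤ CC
    rw [← pit_aeval]
    set f : ℂ[X] := pit p (r+1) with hf
    obtain ⟨a, b, habM, he1, he2, hder⟩ := coeffs_lemma M μ₁ μ₂ hfact f
    have hfR : ∀ z ∈ filledJulia p, ‖f.eval z‖ ≤ R := fun z hz => hRp z hz (r+1)
    have ha : ‖a‖ ≤ Ka := by
      rw [hKa]
      exact divdiff_bound f hs hR0 l₁ l₂ hc₁ hc₂ hfR hμ₁K hμ₂K
        (by linear_combination he1 - he2) hder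
    have hb : ‖b‖ ≤ R + Ka * R := by
      have hbeq : b = f.eval μ₁ - a * μ₁ := by linear_combination he1
      rw [hbeq]
      calc ‖f.eval μ₁ - a * μ₁‖ ≤ ‖f.eval μ₁‖ + ‖a * μ₁‖ := norm_sub_le _ _
        _ = ‖f.eval μ₁‖ + ‖a‖ * ‖μ₁‖ := by rw [norm_mul]
        _ ≤ R + Ka * R := by
            have h1 := hfR μ₁ hμ₁J
            have h2 : ‖a‖ * ‖μ₁‖ ≤ Ka * R :=
              mul_le_mul ha hμ₁R (norm_nonneg _) hKa0
            linarith
    rw [habM]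
    calc ‖a • M + b • (1 : Matrix (Fin 2) (Fin 2) ℂ)‖
        ≤ ‖a • M‖ + ‖b • (1 : Matrix (Fin 2) (Fin 2) ℂ)‖ := norm_add_le _ _
      _ = ‖a‖ * ‖M‖ + ‖b‖ * ‖(1 : Matrix (Fin 2) (Fin 2) ℂ)‖ := by
          rw [norm_smul, norm_smul]
      _ ≤ Ka * CM + (R + Ka * R) * ‖(1 : Matrix (Fin 2) (Fin 2) ℂ)‖ := by
          have h1 : ‖a‖ * ‖M‖ ≤ Ka * CM :=
            mul_le_mul ha hnM.le (norm_nonneg _) hKa0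
          have h2 : ‖b‖ * ‖(1 : Matrix (Fin 2) (Fin 2) ℂ)‖
              ≤ (R + Ka * R) * ‖(1 : Matrix (Fin 2) (Fin 2) ℂ)‖ :=
            mul_le_mul_of_nonneg_right hb (norm_nonneg _)
          linarith
      _ = CC := hCC.symm
  refine ⟨⟨U, hUopen, hAU, hUsub⟩, ?_⟩
  rw [mem_interior]
  exact ⟨U, hUsub, hUopen, hAU⟩
end
end

section
/- Let p be a complex polynomial of degree ≥ 2 and P the corresponding matrix polynomial on 2×2 matrices. A non-diagonalizable matrix M = Q · [[λ,1],[0,λ]] · Q^{-1} satisfies P^n(M) = M for some n ≥ 1 if and only if p^n(λ) = λ and (p^n)'(λ) = 1. -/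
open Matrix Polynomial Filter

noncomputable section

lemma jpow (a b : ℂ) : ∀ k : ℕ, (!![a, b; 0, a] : Matrix (Fin 2) (Fin 2) ℂ) ^ k
    = !![a ^ k, (k : ℂ) * a ^ (k - 1) * b; 0, a ^ k] := by
  intro k
  induction k with
  | zero => simp [Matrix.one_fin_two]
  | succ k ih =>
    rw [pow_succ, ih]
    match k with
    | 0 => simp [Matrix.mul_fin_two]
    | m + 1 =>
      simp only [Matrix.mul_fin_two]
      norm_num
      ring_nf
      simp

lemma jaeval (p : Polynomial ℂ) (a b : ℂ) :
    Polynomial.aeval (!![a, b; 0, a] : Matrix (Fin 2) (Fin 2) ℂ) p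
      = !![p.eval a, b * p.derivative.eval a; 0, p.eval a] := by
  induction p using Polynomial.induction_on' with
  | add p q hp hq =>
    simp [hp, hq]
    ring
  | monomial k c =>
    rw [aeval_monomial, jpow]
    simp [Algebra.algebraMap_eq_smul_one, Matrix.smul_of]
    rw [derivative_monomial, eval_monomial]
    ring

lemma conj_aeval (p : Polynomial ℂ) (u : (Matrix (Fin 2) (Fin 2) ℂ)ˣ)
    (A : Matrix (Fin 2) (Fin 2) ℂ) :
    Polynomial.aeval ((u : Matrix (Fin 2) (Fin 2) ℂ) * A * (↑u⁻¹ : Matrix (Fin 2) (Fin 2) ℂ)) p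
      = (u : Matrix (Fin 2) (Fin 2) ℂ) * Polynomial.aeval A p * (↑u⁻¹ : Matrix (Fin 2) (Fin 2) ℂ) := by
  induction p using Polynomial.induction_on' with
  | add p q hp hq => simp only [map_add, hp, hq, mul_add, add_mul]
  | monomial k c =>
    rw [aeval_monomial, aeval_monomial, Units.conj_pow]
    rw [Algebra.algebraMap_eq_smul_one]
    simp [mul_assoc]

lemma diff_iter (p : Polynomial ℂ) (n : ℕ) :
    Differentiable ℂ ((fun z => p.eval z)^[n]) := by
  induction n with
  | zero => simpa using differentiable_id
  | succ n ih =>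
    rw [Function.iterate_succ']
    exact p.differentiable.comp ih

lemma deriv_iter (p : Polynomial ℂ) (n : ℕ) (l : ℂ) :
    deriv ((fun z => p.eval z)^[n + 1]) l
      = p.derivative.eval ((fun z => p.eval z)^[n] l) * deriv ((fun z => p.eval z)^[n]) l := by
  rw [Function.iterate_succ']
  rw [deriv_comp _ p.differentiable.differentiableAt (diff_iter p n).differentiableAt]
  rw [Polynomial.deriv]

lemma key (p : Polynomial ℂ) (l : ℂ) (u : (Matrix (Fin 2) (Fin 2) ℂ)ˣ) (n : ℕ) :
    (fun N : Matrix (Fin 2) (Fin 2) ℂ => Polynomial.aeval N p)^[n]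
        ((u : Matrix (Fin 2) (Fin 2) ℂ) * !![l, 1; 0, l] * (↑u⁻¹ : Matrix (Fin 2) (Fin 2) ℂ))
      = (u : Matrix (Fin 2) (Fin 2) ℂ)
          * !![(fun z => p.eval z)^[n] l, deriv ((fun z => p.eval z)^[n]) l;
               0, (fun z => p.eval z)^[n] l]
          * (↑u⁻¹ : Matrix (Fin 2) (Fin 2) ℂ) := by
  induction n with
  | zero => simp
  | succ n ih =>
    rw [Function.iterate_succ_apply', ih, conj_aeval, jaeval, deriv_iter,
      Function.iterate_succ_apply']
    ring_nf

theorem stmt15' (p : Polynomial ℂ) (l : ℂ) (u : (Matrix (Fin 2) (Fin 2) ℂ)ˣ) (n : ℕ) :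
    (fun N : Matrix (Fin 2) (Fin 2) ℂ => Polynomial.aeval N p)^[n]
        ((u : Matrix (Fin 2) (Fin 2) ℂ) * !![l, 1; 0, l] * (↑u⁻¹ : Matrix (Fin 2) (Fin 2) ℂ))
      = (u : Matrix (Fin 2) (Fin 2) ℂ) * !![l, 1; 0, l] * (↑u⁻¹ : Matrix (Fin 2) (Fin 2) ℂ)
    ↔ ((fun z => p.eval z)^[n] l = l ∧ deriv ((fun z => p.eval z)^[n]) l = 1) := by
  rw [key]
  have hc : ∀ A B : Matrix (Fin 2) (Fin 2) ℂ,
      ((↑u : Matrix (Fin 2) (Fin 2) ℂ) * A * (↑u⁻¹ : Matrix (Fin 2) (Fin 2) ℂ)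
        = (↑u : Matrix (Fin 2) (Fin 2) ℂ) * B * (↑u⁻¹ : Matrix (Fin 2) (Fin 2) ℂ)) ↔ A = B := by
    intro A B
    constructor
    · intro h
      have h2 := congrArg
        (fun M => (↑u⁻¹ : Matrix (Fin 2) (Fin 2) ℂ) * M * (↑u : Matrix (Fin 2) (Fin 2) ℂ)) h
      calc A = (↑u⁻¹ : Matrix (Fin 2) (Fin 2) ℂ)
              * ((↑u : Matrix (Fin 2) (Fin 2) ℂ) * A * (↑u⁻¹ : Matrix (Fin 2) (Fin 2) ℂ))
              * (↑u : Matrix (Fin 2) (Fin 2) ℂ) := by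
            simp only [← mul_assoc]
            rw [Units.inv_mul, one_mul, mul_assoc, Units.inv_mul, mul_one]
        _ = (↑u⁻¹ : Matrix (Fin 2) (Fin 2) ℂ)
              * ((↑u : Matrix (Fin 2) (Fin 2) ℂ) * B * (↑u⁻¹ : Matrix (Fin 2) (Fin 2) ℂ))
              * (↑u : Matrix (Fin 2) (Fin 2) ℂ) := by rw [h]
        _ = B := by
            simp only [← mul_assoc]
            rw [Units.inv_mul, one_mul, mul_assoc, Units.inv_mul, mul_one]
    · intro h; rw [h]
  rw [hc]
  constructor
  · intro h
    have h00 := congrFun (congrFun h 0) 0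
    have h01 := congrFun (congrFun h 0) 1
    simp at h00 h01
    exact ⟨h00, h01⟩
  · rintro ⟨h1, h2⟩
    rw [h1, h2]


/-- A non-diagonalizable matrix Q·J(λ)·Q⁻¹ is fixed by the n-th iterate of the matrix
polynomial iff λ is fixed by pⁿ and (pⁿ)′(λ) = 1. -/
theorem stmt15 (p : Polynomial ℂ) (hdeg : 2 ≤ p.natDegree) (l : ℂ) (Q : GL (Fin 2) ℂ)
    (n : ℕ) (hn : 1 ≤ n) :
    (fun N : Matrix (Fin 2) (Fin 2) ℂ => Polynomial.aeval N p)^[n]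
        ((Q : Matrix (Fin 2) (Fin 2) ℂ) * !![l, 1; 0, l]
          * ((Q⁻¹ : GL (Fin 2) ℂ) : Matrix (Fin 2) (Fin 2) ℂ))
      = (Q : Matrix (Fin 2) (Fin 2) ℂ) * !![l, 1; 0, l]
          * ((Q⁻¹ : GL (Fin 2) ℂ) : Matrix (Fin 2) (Fin 2) ℂ)
    ↔ ((fun z => p.eval z)^[n] l = l ∧ deriv ((fun z => p.eval z)^[n]) l = 1) := by
  exact stmt15' p l Q n
end
end

section
/- Let p be a complex polynomial of degree d ≥ 2, with Böttcher function φ_p defined and holomorphic on Ω_R = {z : |z| > R} for R sufficiently large, satisfying φ_p(p(z)) = (φ_p(z))^d on Ω_R. Define Φ on 2×2 matrices with both eigenvalues in Ω_R by: Φ(Q diag(λ,μ) Q^{-1}) = Q diag(φ_p(λ), φ_p(μ)) Q^{-1} for diagonalizable matrices, and Φ(Q [[λ,1],[0,λ]] Q^{-1}) = Q [[φ_p(λ), φ_p'(λ)],[0, φ_p(λ)]] Q^{-1} for non-diagonalizable matrices. Then Φ(P(M)) = (Φ(M))^d for every matrix M whose eigenvalues λ satisfy both |λ| > R and |p(λ)|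 > R. -/
open Matrix Polynomial Filter

noncomputable section



private lemma stmt16_conj_mul (Q : GL (Fin 2) ℂ) (A B : Matrix (Fin 2) (Fin 2) ℂ) :
    ((Q : Matrix (Fin 2) (Fin 2) ℂ) * A * ((Q⁻¹ : GL (Fin 2) ℂ) : Matrix (Fin 2) (Fin 2) ℂ)) *
      ((Q : Matrix (Fin 2) (Fin 2) ℂ) * B * ((Q⁻¹ : GL (Fin 2) ℂ) : Matrix (Fin 2) (Fin 2) ℂ))
    = (Q : Matrix (Fin 2) (Fin 2) ℂ) * (A * B) * ((Q⁻¹ : GL (Fin 2) ℂ) : Matrix (Fin 2) (Fin 2) ℂ) := by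
  have h : ((Q⁻¹ : GL (Fin 2) ℂ) : Matrix (Fin 2) (Fin 2) ℂ) * (Q : Matrix (Fin 2) (Fin 2) ℂ) = 1 := by
    rw [← Matrix.GeneralLinearGroup.coe_mul, inv_mul_cancel, Matrix.GeneralLinearGroup.coe_one]
  calc ((Q : Matrix (Fin 2) (Fin 2) ℂ) * A * _) * ((Q : Matrix (Fin 2) (Fin 2) ℂ) * B * _)
      = (Q : Matrix (Fin 2) (Fin 2) ℂ) * A * ((((Q⁻¹ : GL (Fin 2) ℂ) : Matrix (Fin 2) (Fin 2) ℂ) * (Q : Matrix (Fin 2) (Fin 2) ℂ)) * B) * ((Q⁻¹ : GL (Fin 2) ℂ) : Matrix (Fin 2) (Fin 2) ℂ) := by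
        noncomm_ring
    _ = _ := by rw [h]; noncomm_ring

private lemma stmt16_conj_pow (Q : GL (Fin 2) ℂ) (A : Matrix (Fin 2) (Fin 2) ℂ) (n : ℕ) :
    ((Q : Matrix (Fin 2) (Fin 2) ℂ) * A * ((Q⁻¹ : GL (Fin 2) ℂ) : Matrix (Fin 2) (Fin 2) ℂ)) ^ n
    = (Q : Matrix (Fin 2) (Fin 2) ℂ) * A ^ n * ((Q⁻¹ : GL (Fin 2) ℂ) : Matrix (Fin 2) (Fin 2) ℂ) := by
  induction n with
  | zero =>
    rw [pow_zero, pow_zero, mul_one, ← Matrix.GeneralLinearGroup.coe_mul, mul_inv_cancel, Matrix.GeneralLinearGroup.coe_one]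
  | succ n ih => rw [pow_succ, pow_succ, ih, stmt16_conj_mul]

private lemma stmt16_conj_aeval (Q : GL (Fin 2) ℂ) (A : Matrix (Fin 2) (Fin 2) ℂ) (q : Polynomial ℂ) :
    Polynomial.aeval ((Q : Matrix (Fin 2) (Fin 2) ℂ) * A * ((Q⁻¹ : GL (Fin 2) ℂ) : Matrix (Fin 2) (Fin 2) ℂ)) q
    = (Q : Matrix (Fin 2) (Fin 2) ℂ) * (Polynomial.aeval A q) * ((Q⁻¹ : GL (Fin 2) ℂ) : Matrix (Fin 2) (Fin 2) ℂ) := by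
  induction q using Polynomial.induction_on with
  | C a =>
    simp only [aeval_C]
    rw [Algebra.algebraMap_eq_smul_one, Matrix.mul_smul, Matrix.smul_mul, mul_one,
      ← Matrix.GeneralLinearGroup.coe_mul, mul_inv_cancel, Matrix.GeneralLinearGroup.coe_one]
  | add q r hq hr =>
    rw [map_add, map_add, hq, hr, Matrix.mul_add, Matrix.add_mul]
  | monomial n a ih =>
    rw [pow_succ, ← mul_assoc, _root_.map_mul, _root_.map_mul (aeval A), ih, aeval_X, aeval_X, stmt16_conj_mul]

private lemma stmt16_aeval_diag (a c : ℂ) (q : Polynomial ℂ) :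
    Polynomial.aeval !![a, 0; 0, c] q = !![q.eval a, 0; 0, q.eval c] := by
  induction q using Polynomial.induction_on with
  | C r =>
    rw [aeval_C, Algebra.algebraMap_eq_smul_one]
    ext i j
    fin_cases i <;> fin_cases j <;> simp [Matrix.one_apply]
  | add q r hq hr =>
    rw [map_add, hq, hr]
    ext i j
    fin_cases i <;> fin_cases j <;> simp
  | monomial n r ih =>
    rw [pow_succ, ← mul_assoc, _root_.map_mul, ih, aeval_X]
    ext i j
    fin_cases i <;> fin_cases j <;>
      simp [Matrix.mul_apply, Fin.sum_univ_two] <;> ring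

private lemma stmt16_aeval_jord (a : ℂ) (q : Polynomial ℂ) :
    Polynomial.aeval !![a, 1; 0, a] q
      = !![q.eval a, q.derivative.eval a; 0, q.eval a] := by
  induction q using Polynomial.induction_on with
  | C r =>
    rw [aeval_C, Algebra.algebraMap_eq_smul_one]
    ext i j
    fin_cases i <;> fin_cases j <;> simp [Matrix.one_apply]
  | add q r hq hr =>
    rw [map_add, hq, hr]
    ext i j
    fin_cases i <;> fin_cases j <;> simp
  | monomial n r ih =>
    rw [pow_succ, ← mul_assoc, _root_.map_mul, ih, aeval_X]
    ext i j
    fin_cases i <;> fin_cases j <;>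
      simp [Matrix.mul_apply, Fin.sum_univ_two] <;>
    ring

private lemma stmt16_diag_pow (a c : ℂ) (n : ℕ) :
    !![a, 0; 0, c] ^ n = !![a ^ n, 0; 0, c ^ n] := by
  induction n with
  | zero =>
    ext i j
    fin_cases i <;> fin_cases j <;> simp [Matrix.one_apply]
  | succ n ih =>
    rw [pow_succ, ih]
    ext i j
    fin_cases i <;> fin_cases j <;>
      simp [Matrix.mul_apply, Fin.sum_univ_two, pow_succ]

private lemma stmt16_jord_pow (a b : ℂ) (n : ℕ) :
    !![a, b; 0, a] ^ (n + 1)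
      = !![a ^ (n + 1), (n + 1 : ℂ) * a ^ n * b; 0, a ^ (n + 1)] := by
  induction n with
  | zero =>
    ext i j
    fin_cases i <;> fin_cases j <;> simp
  | succ n ih =>
    rw [pow_succ, ih]
    ext i j
    fin_cases i <;> fin_cases j <;>
      simp [Matrix.mul_apply, Fin.sum_univ_two, pow_succ] <;>
    push_cast <;> ring

private lemma stmt16_conj_of (S : GL (Fin 2) ℂ) (A B : Matrix (Fin 2) (Fin 2) ℂ)
    (h : (S : Matrix (Fin 2) (Fin 2) ℂ) * A = B * (S : Matrix (Fin 2) (Fin 2) ℂ)) :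
    (S : Matrix (Fin 2) (Fin 2) ℂ) * A * ((S⁻¹ : GL (Fin 2) ℂ) : Matrix (Fin 2) (Fin 2) ℂ) = B := by
  rw [h, mul_assoc, ← Matrix.GeneralLinearGroup.coe_mul, mul_inv_cancel,
    Matrix.GeneralLinearGroup.coe_one, mul_one]

private lemma stmt16_reconj (Q S : GL (Fin 2) ℂ) (A B : Matrix (Fin 2) (Fin 2) ℂ)
    (h : (S : Matrix (Fin 2) (Fin 2) ℂ) * A * ((S⁻¹ : GL (Fin 2) ℂ) : Matrix (Fin 2) (Fin 2) ℂ) = B) :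
    (Q : Matrix (Fin 2) (Fin 2) ℂ) * B * ((Q⁻¹ : GL (Fin 2) ℂ) : Matrix (Fin 2) (Fin 2) ℂ)
      = ((Q * S : GL (Fin 2) ℂ) : Matrix (Fin 2) (Fin 2) ℂ) * A
        * (((Q * S)⁻¹ : GL (Fin 2) ℂ) : Matrix (Fin 2) (Fin 2) ℂ) := by
  rw [← h, _root_.mul_inv_rev, Matrix.GeneralLinearGroup.coe_mul, Matrix.GeneralLinearGroup.coe_mul]
  noncomm_ring

private lemma stmt16_norm_ne (x y : ℂ) (h : ¬(x = 0 ∧ y = 0)) :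
    x * star x + y * star y ≠ 0 := by
  rw [show star x = (starRingEnd ℂ) x from rfl, show star y = (starRingEnd ℂ) y from rfl,
    Complex.mul_conj, Complex.mul_conj, ← Complex.ofReal_add]
  intro h0
  rw [Complex.ofReal_eq_zero] at h0
  have hx := Complex.normSq_nonneg x
  have hy := Complex.normSq_nonneg y
  have hx0 : Complex.normSq x = 0 := by linarith
  have hy0 : Complex.normSq y = 0 := by linarith
  exact h ⟨Complex.normSq_eq_zero.mp hx0, Complex.normSq_eq_zero.mp hy0⟩

private lemma stmt16_spec_mem (M T : Matrix (Fin 2) (Fin 2) ℂ) (Q : GL (Fin 2) ℂ)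
    (h : M = (Q : Matrix (Fin 2) (Fin 2) ℂ) * T * ((Q⁻¹ : GL (Fin 2) ℂ) : Matrix (Fin 2) (Fin 2) ℂ))
    (hT : T 1 0 = 0) (i : Fin 2) : T i i ∈ spectrum ℂ M := by
  rw [spectrum.mem_iff]
  intro hu
  rw [Matrix.isUnit_iff_isUnit_det] at hu
  have key : algebraMap ℂ (Matrix (Fin 2) (Fin 2) ℂ) (T i i) - M
      = (Q : Matrix (Fin 2) (Fin 2) ℂ) * (algebraMap ℂ (Matrix (Fin 2) (Fin 2) ℂ) (T i i) - T)
        * ((Q⁻¹ : GL (Fin 2) ℂ) : Matrix (Fin 2) (Fin 2) ℂ) := by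
    rw [h, Algebra.algebraMap_eq_smul_one, Matrix.mul_sub, Matrix.sub_mul, Matrix.mul_smul,
      Matrix.smul_mul, mul_one, ← Matrix.GeneralLinearGroup.coe_mul, mul_inv_cancel,
      Matrix.GeneralLinearGroup.coe_one]
  have hdet : (algebraMap ℂ (Matrix (Fin 2) (Fin 2) ℂ) (T i i) - M).det = 0 := by
    rw [key, Matrix.det_mul, Matrix.det_mul]
    have h1 : (algebraMap ℂ (Matrix (Fin 2) (Fin 2) ℂ) (T i i) - T).det = 0 := by
      rw [Algebra.algebraMap_eq_smul_one, Matrix.det_fin_two]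
      fin_cases i <;>
        simp [Matrix.sub_apply, Matrix.smul_apply, Matrix.one_apply, hT]
    rw [h1]; ring
  rw [hdet] at hu
  exact hu.ne_zero rfl

private lemma stmt16_triang (M : Matrix (Fin 2) (Fin 2) ℂ) :
    ∃ (Q : GL (Fin 2) ℂ) (a b c : ℂ),
      M = (Q : Matrix (Fin 2) (Fin 2) ℂ) * !![a, b; 0, c]
        * ((Q⁻¹ : GL (Fin 2) ℂ) : Matrix (Fin 2) (Fin 2) ℂ) := by
  -- find an eigenvalue
  obtain ⟨l, hl⟩ : ∃ l : ℂ, (M 0 0 - l) * (M 1 1 - l) - M 0 1 * M 1 0 = 0 := by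
    obtain ⟨l, hl⟩ := Complex.exists_root (f := C 1 * X ^ 2 + C (-(M 0 0 + M 1 1)) * X
        + C (M 0 0 * M 1 1 - M 0 1 * M 1 0)) (by
      rw [Polynomial.degree_quadratic one_ne_zero]; norm_num)
    refine ⟨l, ?_⟩
    have := hl
    simp only [Polynomial.IsRoot, Polynomial.eval_add, Polynomial.eval_mul, Polynomial.eval_pow,
      Polynomial.eval_C, Polynomial.eval_X] at this
    linear_combination this
  set α := M 0 0 - l with hα
  set β := M 0 1 with hβ
  set γ := M 1 0 with hγ
  set δ := M 1 1 - l with hδ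
  by_cases hall : α = 0 ∧ β = 0 ∧ γ = 0 ∧ δ = 0
  · refine ⟨1, l, 0, l, ?_⟩
    rw [inv_one, Matrix.GeneralLinearGroup.coe_one, one_mul, mul_one]
    have h00 : M 0 0 = l := by have h := hall.1; rw [hα, sub_eq_zero] at h; exact h
    have h11 : M 1 1 = l := by have h := hall.2.2.2; rw [hδ, sub_eq_zero] at h; exact h
    have h01 : M 0 1 = 0 := hall.2.1
    have h10 : M 1 0 = 0 := hall.2.2.1
    rw [Matrix.eta_fin_two M, h00, h11, h01, h10]
  · -- get an eigenvector (v0, v1)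
    obtain ⟨v0, v1, hv, h1, h2⟩ : ∃ v0 v1 : ℂ, ¬(v0 = 0 ∧ v1 = 0)
        ∧ α * v0 + β * v1 = 0 ∧ γ * v0 + δ * v1 = 0 := by
      by_cases hba : β = 0 ∧ α = 0
      · refine ⟨δ, -γ, ?_, ?_, ?_⟩
        · intro hdg
          exact hall ⟨hba.2, hba.1, by simpa using hdg.2, hdg.1⟩
        · linear_combination hl
        · ring
      · refine ⟨β, -α, ?_, by ring, ?_⟩
        · intro hba'
          exact hba ⟨hba'.1, by simpa using hba'.2⟩
        · linear_combination -hl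
    set Q0 : Matrix (Fin 2) (Fin 2) ℂ := !![v0, -star v1; v1, star v0] with hQ0
    have hv' : v0 * star v0 + v1 * star v1 ≠ 0 := stmt16_norm_ne v0 v1 hv
    have hdet0 : Q0.det ≠ 0 := by
      rw [hQ0, Matrix.det_fin_two_of]
      intro h0
      exact hv' (by linear_combination h0)
    have hunit : IsUnit Q0.det := isUnit_iff_ne_zero.mpr hdet0
    set u : Matrix (Fin 2) (Fin 2) ℂ := Q0⁻¹ * M * Q0 with hu_def
    have hQM : Q0 * u = M * Q0 := by
      rw [hu_def, ← mul_assoc, ← mul_assoc, Matrix.mul_nonsing_inv _ hunit, one_mul]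
    have hM' : M = Q0 * u * Q0⁻¹ := by
      rw [hQM, mul_assoc, Matrix.mul_nonsing_inv _ hunit, mul_one]
    have hm1 : M 0 0 * v0 + M 0 1 * v1 = l * v0 := by
      linear_combination h1 - v0 * hα - v1 * hβ
    have hm2 : M 1 0 * v0 + M 1 1 * v1 = l * v1 := by
      linear_combination h2 - v0 * hγ - v1 * hδ
    have e1 : (Q0 * u) 0 0 = (M * Q0) 0 0 := by rw [hQM]
    have e2 : (Q0 * u) 1 0 = (M * Q0) 1 0 := by rw [hQM]
    rw [Matrix.mul_apply, Fin.sum_univ_two, Matrix.mul_apply, Fin.sum_univ_two] at e1 e2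
    have hq00 : Q0 0 0 = v0 := rfl
    have hq01 : Q0 0 1 = -star v1 := rfl
    have hq10 : Q0 1 0 = v1 := rfl
    have hq11 : Q0 1 1 = star v0 := rfl
    simp only [hq00, hq01, hq10, hq11] at e1 e2
    have f1 : v0 * u 0 0 + -star v1 * u 1 0 = l * v0 := by linear_combination e1 + hm1
    have f2 : v1 * u 0 0 + star v0 * u 1 0 = l * v1 := by linear_combination e2 + hm2
    have hu00 : u 0 0 = l := by
      refine mul_left_cancel₀ hv' ?_
      linear_combination star v0 * f1 + star v1 * f2
    have hu10 : u 1 0 = 0 := by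
      refine mul_left_cancel₀ hv' ?_
      linear_combination (-v1) * f1 + v0 * f2
    have hu : u = !![l, u 0 1; 0, u 1 1] := by
      have h := Matrix.eta_fin_two u
      rw [hu00, hu10] at h
      exact h
    refine ⟨Matrix.GeneralLinearGroup.mkOfDetNeZero Q0 hdet0, l, u 0 1, u 1 1, ?_⟩
    have hQcoe : ((Matrix.GeneralLinearGroup.mkOfDetNeZero Q0 hdet0 : GL (Fin 2) ℂ) :
        Matrix (Fin 2) (Fin 2) ℂ) = Q0 := rfl
    rw [Matrix.GeneralLinearGroup.coe_inv, hQcoe, ← hu]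
    exact hM'


private lemma stmt16_chain (p : Polynomial ℂ) (d : ℕ) (R : ℝ) (φ : ℂ → ℂ)
    (hφdiff : DifferentiableOn ℂ φ {z : ℂ | R < ‖z‖})
    (hφeq : ∀ z : ℂ, R < ‖z‖ → φ (p.eval z) = φ z ^ d)
    (l : ℂ) (hl : R < ‖l‖) (hpl : R < ‖p.eval l‖) :
    deriv φ (p.eval l) * p.derivative.eval l = (d : ℂ) * φ l ^ (d - 1) * deriv φ l := by
  have hopen : IsOpen {z : ℂ | R < ‖z‖} :=
    isOpen_lt continuous_const continuous_norm
  have hmem : {z : ℂ | R < ‖z‖} ∈ nhds l := hopen.mem_nhds hl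
  have hφl : DifferentiableAt ℂ φ l := hφdiff.differentiableAt hmem
  have hφpl : DifferentiableAt ℂ φ (p.eval l) :=
    hφdiff.differentiableAt (hopen.mem_nhds hpl)
  have hp : DifferentiableAt ℂ (fun z : ℂ => p.eval z) l := p.differentiableAt
  have hcomp : deriv (fun z : ℂ => φ (p.eval z)) l
      = deriv φ (p.eval l) * p.derivative.eval l := by
    rw [show (fun z : ℂ => φ (p.eval z)) = φ ∘ (fun z : ℂ => p.eval z) from rfl,
      deriv_comp l hφpl hp, Polynomial.deriv]
  have heq : (fun z : ℂ => φ (p.eval z)) =ᶠ[nhds l] fun z : ℂ => φ z ^ d :=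
    eventually_of_mem hmem fun z hz => hφeq z hz
  have h2 : deriv (fun z : ℂ => φ (p.eval z)) l = deriv (fun z : ℂ => φ z ^ d) l :=
    heq.deriv_eq
  rw [← hcomp, h2, deriv_fun_pow hφl d]

private lemma stmt16_spec_placeholder : True := trivial
private lemma stmt16_jordan (M : Matrix (Fin 2) (Fin 2) ℂ) :
    ∃ Q : GL (Fin 2) ℂ,
      (∃ a c : ℂ, M = (Q : Matrix (Fin 2) (Fin 2) ℂ) * !![a, 0; 0, c]
          * ((Q⁻¹ : GL (Fin 2) ℂ) : Matrix (Fin 2) (Fin 2) ℂ)) ∨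
      (∃ a : ℂ, M = (Q : Matrix (Fin 2) (Fin 2) ℂ) * !![a, 1; 0, a]
          * ((Q⁻¹ : GL (Fin 2) ℂ) : Matrix (Fin 2) (Fin 2) ℂ)) := by
  obtain ⟨Q, a, b, c, hM⟩ := stmt16_triang M
  by_cases hac : a = c
  · subst hac
    by_cases hb : b = 0
    · subst hb
      exact ⟨Q, Or.inl ⟨a, a, hM⟩⟩
    · have hdetS : (!![b, 0; 0, 1] : Matrix (Fin 2) (Fin 2) ℂ).det ≠ 0 := by
        rw [Matrix.det_fin_two_of]; simpa using hb
      set S : GL (Fin 2) ℂ := Matrix.GeneralLinearGroup.mkOfDetNeZero _ hdetS with hS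
      have hScoe : (S : Matrix (Fin 2) (Fin 2) ℂ) = !![b, 0; 0, 1] := rfl
      have hconj : (S : Matrix (Fin 2) (Fin 2) ℂ) * !![a, 1; 0, a]
          * ((S⁻¹ : GL (Fin 2) ℂ) : Matrix (Fin 2) (Fin 2) ℂ) = !![a, b; 0, a] := by
        refine stmt16_conj_of S _ _ ?_
        rw [hScoe]
        ext i j
        fin_cases i <;> fin_cases j <;>
          simp [Matrix.mul_apply, Fin.sum_univ_two] <;> ring
      refine ⟨Q * S, Or.inr ⟨a, ?_⟩⟩
      rw [hM, stmt16_reconj Q S _ _ hconj]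
  · have hdetS : (!![1, b; 0, c - a] : Matrix (Fin 2) (Fin 2) ℂ).det ≠ 0 := by
      rw [Matrix.det_fin_two_of]
      simpa [sub_eq_zero] using fun h => hac h.symm
    set S : GL (Fin 2) ℂ := Matrix.GeneralLinearGroup.mkOfDetNeZero _ hdetS with hS
    have hScoe : (S : Matrix (Fin 2) (Fin 2) ℂ) = !![1, b; 0, c - a] := rfl
    have hconj : (S : Matrix (Fin 2) (Fin 2) ℂ) * !![a, 0; 0, c]
        * ((S⁻¹ : GL (Fin 2) ℂ) : Matrix (Fin 2) (Fin 2) ℂ) = !![a, b; 0, c] := by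
      refine stmt16_conj_of S _ _ ?_
      rw [hScoe]
      ext i j
      fin_cases i <;> fin_cases j <;>
        simp [Matrix.mul_apply, Fin.sum_univ_two] <;> ring
    refine ⟨Q * S, Or.inl ⟨a, c, ?_⟩⟩
    rw [hM, stmt16_reconj Q S _ _ hconj]
/-- The Böttcher-type function Φ of the matrix polynomial semiconjugates P to the
d-th power map. -/
theorem stmt16 (p : Polynomial ℂ) (d : ℕ) (hd : 2 ≤ d) (hdeg : p.natDegree = d)
    (R : ℝ) (hR : 1 < R) (φ : ℂ → ℂ)
    (hφdiff : DifferentiableOn ℂ φ {z : ℂ | R < ‖z‖})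
    (hφeq : ∀ z : ℂ, R < ‖z‖ → φ (p.eval z) = φ z ^ d)
    (Φ : Matrix (Fin 2) (Fin 2) ℂ → Matrix (Fin 2) (Fin 2) ℂ)
    (hΦdiag : ∀ (l μ : ℂ) (Q : GL (Fin 2) ℂ), R < ‖l‖ → R < ‖μ‖ →
      Φ ((Q : Matrix (Fin 2) (Fin 2) ℂ) * !![l, 0; 0, μ]
          * ((Q⁻¹ : GL (Fin 2) ℂ) : Matrix (Fin 2) (Fin 2) ℂ))
        = (Q : Matrix (Fin 2) (Fin 2) ℂ) * !![φ l, 0; 0, φ μ]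
          * ((Q⁻¹ : GL (Fin 2) ℂ) : Matrix (Fin 2) (Fin 2) ℂ))
    (hΦjord : ∀ (l : ℂ) (Q : GL (Fin 2) ℂ), R < ‖l‖ →
      Φ ((Q : Matrix (Fin 2) (Fin 2) ℂ) * !![l, 1; 0, l]
          * ((Q⁻¹ : GL (Fin 2) ℂ) : Matrix (Fin 2) (Fin 2) ℂ))
        = (Q : Matrix (Fin 2) (Fin 2) ℂ) * !![φ l, deriv φ l; 0, φ l]
          * ((Q⁻¹ : GL (Fin 2) ℂ) : Matrix (Fin 2) (Fin 2) ℂ))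
    (M : Matrix (Fin 2) (Fin 2) ℂ)
    (hM : ∀ μ ∈ spectrum ℂ M, R < ‖μ‖ ∧ R < ‖p.eval μ‖) :
    Φ (Polynomial.aeval M p) = Φ M ^ d := by
  obtain ⟨Q, hcase⟩ := stmt16_jordan M
  rcases hcase with ⟨a, c, hMf⟩ | ⟨a, hMf⟩
  · -- diagonalizable case
    have ha : a ∈ spectrum ℂ M := by
      simpa using stmt16_spec_mem M !![a, 0; 0, c] Q hMf (by simp) 0
    have hc : c ∈ spectrum ℂ M := by
      simpa using stmt16_spec_mem M !![a, 0; 0, c] Q hMf (by simp) 1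
    obtain ⟨haR, hpaR⟩ := hM a ha
    obtain ⟨hcR, hpcR⟩ := hM c hc
    have hL : Φ (Polynomial.aeval M p)
        = (Q : Matrix (Fin 2) (Fin 2) ℂ) * !![φ (p.eval a), 0; 0, φ (p.eval c)]
          * ((Q⁻¹ : GL (Fin 2) ℂ) : Matrix (Fin 2) (Fin 2) ℂ) := by
      rw [hMf, stmt16_conj_aeval, stmt16_aeval_diag]
      exact hΦdiag _ _ Q hpaR hpcR
    have hRt : Φ M ^ d
        = (Q : Matrix (Fin 2) (Fin 2) ℂ) * !![φ a ^ d, 0; 0, φ c ^ d]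
          * ((Q⁻¹ : GL (Fin 2) ℂ) : Matrix (Fin 2) (Fin 2) ℂ) := by
      rw [hMf, hΦdiag a c Q haR hcR, stmt16_conj_pow, stmt16_diag_pow]
    rw [hL, hRt, hφeq a haR, hφeq c hcR]
  · -- Jordan block case
    have ha : a ∈ spectrum ℂ M := by
      simpa using stmt16_spec_mem M !![a, 1; 0, a] Q hMf (by simp) 0
    obtain ⟨haR, hpaR⟩ := hM a ha
    have hchain := stmt16_chain p d R φ hφdiff hφeq a haR hpaR
    have haev : Polynomial.aeval M p
        = (Q : Matrix (Fin 2) (Fin 2) ℂ)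
          * !![p.eval a, p.derivative.eval a; 0, p.eval a]
          * ((Q⁻¹ : GL (Fin 2) ℂ) : Matrix (Fin 2) (Fin 2) ℂ) := by
      rw [hMf, stmt16_conj_aeval, stmt16_aeval_jord]
    have hRt : Φ M ^ d
        = (Q : Matrix (Fin 2) (Fin 2) ℂ)
          * !![φ a ^ d, (d : ℂ) * φ a ^ (d - 1) * deriv φ a; 0, φ a ^ d]
          * ((Q⁻¹ : GL (Fin 2) ℂ) : Matrix (Fin 2) (Fin 2) ℂ) := by
      rw [hMf, hΦjord a Q haR, stmt16_conj_pow]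
      obtain ⟨k, hk⟩ : ∃ k, d = k + 1 := ⟨d - 1, by omega⟩
      subst hk
      rw [stmt16_jord_pow]
      simp only [Nat.add_sub_cancel]
      push_cast
      ring_nf
    by_cases hpd : p.derivative.eval a = 0
    · have hz : (d : ℂ) * φ a ^ (d - 1) * deriv φ a = 0 := by
        rw [← hchain, hpd, mul_zero]
      have hL : Φ (Polynomial.aeval M p)
          = (Q : Matrix (Fin 2) (Fin 2) ℂ) * !![φ (p.eval a), 0; 0, φ (p.eval a)]
            * ((Q⁻¹ : GL (Fin 2) ℂ) : Matrix (Fin 2) (Fin 2) ℂ) := by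
        rw [haev, hpd]
        exact hΦdiag _ _ Q hpaR hpaR
      rw [hL, hRt, hφeq a haR, hz]
    · have hdetS : (!![p.derivative.eval a, 0; 0, 1] : Matrix (Fin 2) (Fin 2) ℂ).det ≠ 0 := by
        rw [Matrix.det_fin_two_of]; simpa using hpd
      set S : GL (Fin 2) ℂ := Matrix.GeneralLinearGroup.mkOfDetNeZero _ hdetS with hS
      have hScoe : (S : Matrix (Fin 2) (Fin 2) ℂ) = !![p.derivative.eval a, 0; 0, 1] := rfl
      have hconj : (S : Matrix (Fin 2) (Fin 2) ℂ) * !![p.eval a, 1; 0, p.eval a]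
          * ((S⁻¹ : GL (Fin 2) ℂ) : Matrix (Fin 2) (Fin 2) ℂ)
          = !![p.eval a, p.derivative.eval a; 0, p.eval a] := by
        refine stmt16_conj_of S _ _ ?_
        rw [hScoe]
        ext i j
        fin_cases i <;> fin_cases j <;>
          simp [Matrix.mul_apply, Fin.sum_univ_two] <;> ring
      have hconj2 : (S : Matrix (Fin 2) (Fin 2) ℂ)
          * !![φ (p.eval a), deriv φ (p.eval a); 0, φ (p.eval a)]
          * ((S⁻¹ : GL (Fin 2) ℂ) : Matrix (Fin 2) (Fin 2) ℂ)
          = !![φ (p.eval a), p.derivative.eval a * deriv φ (p.eval a); 0, φ (p.eval a)] := by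
        refine stmt16_conj_of S _ _ ?_
        rw [hScoe]
        ext i j
        fin_cases i <;> fin_cases j <;>
          simp [Matrix.mul_apply, Fin.sum_univ_two] <;> ring
      have hL : Φ (Polynomial.aeval M p)
          = (Q : Matrix (Fin 2) (Fin 2) ℂ)
            * !![φ (p.eval a), p.derivative.eval a * deriv φ (p.eval a); 0, φ (p.eval a)]
            * ((Q⁻¹ : GL (Fin 2) ℂ) : Matrix (Fin 2) (Fin 2) ℂ) := by
        rw [haev, stmt16_reconj Q S _ _ hconj, hΦjord (p.eval a) (Q * S) hpaR,
          ← stmt16_reconj Q S _ _ hconj2]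
      rw [hL, hRt, hφeq a haR,
        show p.derivative.eval a * deriv φ (p.eval a)
            = (d : ℂ) * φ a ^ (d - 1) * deriv φ a from by rw [← hchain]; ring]
end
end
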